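/- arXiv:1107.4130 — 3 statements merged into one kernel-verified Lean document; each statement's English description precedes it below -/
import Mathlib

section
/- Let τ ∈ K̄. If p ≡ 1 (mod 4), then −1 ∈ R and τ maps R onto R and N onto N. If p ≡ 3 (mod 4), then −1 ∈ N and τ maps R onto N and N onto R. -/
instance (X : Type*) [DecidableEq X] : DecidableEq (OnePoint X) :=
  inferInstanceAs (DecidableEq (Option X))

/-- The translation `z ↦ z + a` on `ℤ/p ∪ {∞}`, fixing `∞`. -/
def ptrans (p : ℕ) (a : ZMod p) : Equiv.Perm (OnePoint (ZMod p)) :=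
  Equiv.optionCongr (Equiv.addRight a)

/-- The map `z ↦ a z` on `ℤ/p ∪ {∞}`, fixing `∞`, for `a ≠ 0`. -/
def pmul (p : ℕ) [Fact p.Prime] (a : ZMod p) (ha : a ≠ 0) : Equiv.Perm (OnePoint (ZMod p)) :=
  Equiv.optionCongr (Equiv.mulLeft₀ a ha)

/-- Multiplication by `a` extended to `ℤ/p ∪ {∞}` (with `a·∞ = ∞`). -/
def opSmul (p : ℕ) (a : ZMod p) : OnePoint (ZMod p) → OnePoint (ZMod p) :=
  fun x => Option.map (fun z => a * z) x

/-- Underlying function of the map `z ↦ -1/z`. -/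
def negInvFun (p : ℕ) : OnePoint (ZMod p) → OnePoint (ZMod p)
  | Option.none => Option.some (0 : ZMod p)
  | Option.some z => if z = 0 then Option.none else Option.some (-z⁻¹ : ZMod p)

/-- The permutation `z ↦ -1/z` of `ℤ/p ∪ {∞}` (sending `0 ↦ ∞` and `∞ ↦ 0`). -/
def negInvPerm (p : ℕ) [Fact p.Prime] : Equiv.Perm (OnePoint (ZMod p)) :=
  Function.Involutive.toPerm (negInvFun p) (by
    intro x
    match x with
    | Option.none => simp [negInvFun] <;> rfl
    | Option.some z =>
      by_cases hz : z = 0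
      · simp [negInvFun, hz] <;> rfl
      · have h1 : (-z⁻¹ : ZMod p) ≠ 0 := by simp [hz]
        (simp [negInvFun, hz, h1, inv_neg, inv_inv] <;> rfl))

/-- The involution `(0 ∞)(1 3)(2 6)(4 5)`. -/
def inv1 (p : ℕ) : Equiv.Perm (OnePoint (ZMod p)) :=
  Equiv.swap ((0 : ZMod p) : OnePoint (ZMod p)) OnePoint.infty *
  Equiv.swap ((1 : ZMod p) : OnePoint (ZMod p)) ((3 : ZMod p) : OnePoint (ZMod p)) *
  Equiv.swap ((2 : ZMod p) : OnePoint (ZMod p)) ((6 : ZMod p) : OnePoint (ZMod p)) *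
  Equiv.swap ((4 : ZMod p) : OnePoint (ZMod p)) ((5 : ZMod p) : OnePoint (ZMod p))

/-- The involution `(0 ∞)(1 5)(2 3)(4 6)`. -/
def inv2 (p : ℕ) : Equiv.Perm (OnePoint (ZMod p)) :=
  Equiv.swap ((0 : ZMod p) : OnePoint (ZMod p)) OnePoint.infty *
  Equiv.swap ((1 : ZMod p) : OnePoint (ZMod p)) ((5 : ZMod p) : OnePoint (ZMod p)) *
  Equiv.swap ((2 : ZMod p) : OnePoint (ZMod p)) ((3 : ZMod p) : OnePoint (ZMod p)) *
  Equiv.swap ((4 : ZMod p) : OnePoint (ZMod p)) ((6 : ZMod p) : OnePoint (ZMod p))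

/-- The set of nonzero squares in `ℤ/p`. -/
def Rset (p : ℕ) : Set (ZMod p) := {a | a ≠ 0 ∧ IsSquare a}

/-- The set of nonsquares in `(ℤ/p)*`. -/
def Nset (p : ℕ) : Set (ZMod p) := {a | a ≠ 0 ∧ ¬ IsSquare a}

open MulAction Equiv Pointwise

namespace KP

lemma natcard_orbstab {Γ β : Type*} [Group Γ] [MulAction Γ β] (x : β) :
    Nat.card Γ = Nat.card (orbit Γ x) * Nat.card (stabilizer Γ x) := by
  rw [Subgroup.card_eq_card_quotient_mul_card_subgroup (stabilizer Γ x),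
    Nat.card_congr (orbitEquivQuotientStabilizer Γ x)]

variable {p : ℕ} [hp : Fact p.Prime]

@[simp] lemma ptrans_some (a z : ZMod p) :
    ptrans p a (OnePoint.some z) = OnePoint.some (z + a) := rfl

@[simp] lemma ptrans_infty (a : ZMod p) : ptrans p a OnePoint.infty = OnePoint.infty := rfl

@[simp] lemma pmul_some (a : ZMod p) (ha : a ≠ 0) (z : ZMod p) :
    pmul p a ha (OnePoint.some z) = OnePoint.some (a * z) := rfl

@[simp] lemma pmul_infty (a : ZMod p) (ha : a ≠ 0) :
    pmul p a ha OnePoint.infty = OnePoint.infty := rfl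

lemma some_ne_infty (z : ZMod p) : OnePoint.some z ≠ OnePoint.infty := Option.some_ne_none _

lemma some_inj {z w : ZMod p} (h : OnePoint.some z = OnePoint.some w) : z = w :=
  Option.some_injective _ h

lemma fix_infty_ne {g : Equiv.Perm (OnePoint (ZMod p))} (hg : g OnePoint.infty = OnePoint.infty)
    (z : ZMod p) : g (OnePoint.some z) ≠ OnePoint.infty := by
  intro h
  exact some_ne_infty z (g.injective (h.trans hg.symm))

section G
variable (hp2 : p ≠ 2) (G : Subgroup (Equiv.Perm (OnePoint (ZMod p))))
  (htrans : ∀ x y : OnePoint (ZMod p), ∃ g ∈ G, g x = y)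
  (hcard : Nat.card G = (p ^ 3 - p) / 2)
  (htransl : ∀ a : ZMod p, ptrans p a ∈ G)

include hp2 in
lemma two_m : 2 * ((p - 1) / 2) = p - 1 := by
  have : Odd p := hp.out.odd_of_ne_two hp2
  obtain ⟨k, hk⟩ := this
  omega

include hp2 hcard in
lemma cardG : Nat.card G = (p + 1) * (p * ((p - 1) / 2)) := by
  have h2m := two_m (p := p) hp2
  set m := (p - 1) / 2 with hm
  have hp3 : 3 ≤ p := by
    have := hp.out.two_le; rcases Nat.lt_or_ge p 3 with h | h; · interval_cases p <;> omega
    · exact h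
  have hp21 : p = 2 * m + 1 := by omega
  have hkey : p ^ 3 = ((p + 1) * (p * m)) * 2 + p := by rw [hp21]; ring
  rw [hcard, Nat.sub_eq_of_eq_add hkey, Nat.mul_div_cancel _ (by norm_num)]

include hp2 hcard htrans in
lemma cardH : Nat.card (stabilizer G (OnePoint.infty : OnePoint (ZMod p))) =
    p * ((p - 1) / 2) := by
  have horb : orbit G (OnePoint.infty : OnePoint (ZMod p)) = Set.univ := by
    ext y
    simp only [Set.mem_univ, iff_true, mem_orbit_iff]
    obtain ⟨g, hg, hgx⟩ := htrans OnePoint.infty y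
    exact ⟨⟨g, hg⟩, hgx⟩
  have hcardorb : Nat.card (orbit G (OnePoint.infty : OnePoint (ZMod p))) = p + 1 := by
    rw [horb]
    calc Nat.card (Set.univ : Set (OnePoint (ZMod p))) = Nat.card (OnePoint (ZMod p)) :=
          Nat.card_congr (Equiv.Set.univ _)
      _ = p + 1 := by
          rw [Nat.card_eq_fintype_card,
            Fintype.card_congr (show OnePoint (ZMod p) ≃ Option (ZMod p) from Equiv.refl _)]
          simp [ZMod.card]
  have := natcard_orbstab (Γ := G) (OnePoint.infty : OnePoint (ZMod p))
  rw [hcardorb, cardG hp2 G hcard] at this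
  exact (Nat.eq_of_mul_eq_mul_left (by positivity) this.symm)

include hp2 hcard htrans htransl in
lemma cardK : Nat.card (stabilizer (stabilizer G (OnePoint.infty : OnePoint (ZMod p)))
    (OnePoint.some (0 : ZMod p))) = (p - 1) / 2 := by
  set H := stabilizer G (OnePoint.infty : OnePoint (ZMod p)) with hH
  have horb : orbit H (OnePoint.some (0 : ZMod p)) = {x | x ≠ OnePoint.infty} := by
    ext y
    constructor
    · rintro ⟨h, rfl⟩
      exact fix_infty_ne h.2 0
    · intro hy
      obtain ⟨z, rfl⟩ : ∃ z : ZMod p, y = OnePoint.some z := by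
        rcases y with _ | z
        · exact absurd rfl hy
        · exact ⟨z, rfl⟩
      refine ⟨⟨⟨ptrans p z, htransl z⟩, rfl⟩, ?_⟩
      show ptrans p z (OnePoint.some 0) = OnePoint.some z
      simp
  have hcardorb : Nat.card (orbit H (OnePoint.some (0 : ZMod p))) = p := by
    rw [horb]
    have e : ZMod p ≃ {x : OnePoint (ZMod p) | x ≠ OnePoint.infty} := by
      refine Equiv.ofBijective (fun z => ⟨OnePoint.some z, some_ne_infty z⟩) ⟨?_, ?_⟩
      · intro a b hab
        exact some_inj (Subtype.ext_iff.mp hab)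
      · rintro ⟨y, hy⟩
        rcases y with _ | z
        · exact absurd rfl hy
        · exact ⟨z, rfl⟩
    rw [← Nat.card_congr e]
    simp [Nat.card_eq_fintype_card, ZMod.card]
  have := natcard_orbstab (Γ := H) (OnePoint.some (0 : ZMod p))
  rw [hcardorb, cardH hp2 G htrans hcard] at this
  exact (Nat.eq_of_mul_eq_mul_left (by have := hp.out.two_le; omega) this.symm)

/-- translation as an element of the stabilizer of ∞ -/
def tH (a : ZMod p) : stabilizer G (OnePoint.infty : OnePoint (ZMod p)) :=
  ⟨⟨ptrans p a, htransl a⟩, rfl⟩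

include htransl in
lemma tH_mul (a b : ZMod p) : tH G htransl (a + b) = tH G htransl a * tH G htransl b := by
  apply Subtype.ext; apply Subtype.ext; apply Equiv.ext
  rintro (_ | z)
  · rfl
  · show OnePoint.some (z + (a + b)) = OnePoint.some (z + b + a)
    rw [add_comm a b, add_assoc]

/-- the homomorphism into the stabilizer of ∞ -/
def psiH : Multiplicative (ZMod p) →* stabilizer G (OnePoint.infty : OnePoint (ZMod p)) :=
  MonoidHom.mk' (fun a : Multiplicative (ZMod p) => tH G htransl a.toAdd)
    (fun a b => tH_mul G htransl a.toAdd b.toAdd)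

/-- the translation subgroup of the stabilizer of ∞. -/
def Tsub : Subgroup (stabilizer G (OnePoint.infty : OnePoint (ZMod p))) :=
  MonoidHom.range (psiH G htransl)

include htransl in
lemma psiH_inj : Function.Injective (psiH G htransl) := by
  intro a b hab
  have h2 := congrArg (fun x : stabilizer G (OnePoint.infty : OnePoint (ZMod p)) =>
    ((x : G) : Equiv.Perm (OnePoint (ZMod p))) (OnePoint.some 0)) hab
  have h3 : OnePoint.some ((0 : ZMod p) + a.toAdd) = OnePoint.some ((0 : ZMod p) + b.toAdd) := h2
  have := some_inj h3
  simpa using this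

include htransl in
lemma card_Tsub : Nat.card (Tsub G htransl) = p := by
  show Nat.card (MonoidHom.range (psiH G htransl)) = p
  rw [← Nat.card_congr (MonoidHom.ofInjective (psiH_inj G htransl)).toEquiv]
  simp [Nat.card_eq_fintype_card, ZMod.card]

include hp2 htrans hcard htransl in
lemma conj_translation : ∀ g ∈ G, g OnePoint.infty = OnePoint.infty →
    ∀ b : ZMod p, ∃ a : ZMod p, g * ptrans p b * g⁻¹ = ptrans p a := by
  intro g hgG hgfix b
  set H := stabilizer G (OnePoint.infty : OnePoint (ZMod p)) with hH
  have hcardH : Nat.card H = p * ((p - 1) / 2) := cardH hp2 G htrans hcard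
  have hm_pos : 0 < (p - 1) / 2 := by have := hp.out.two_le; have := two_m (p := p) hp2; omega
  have hm_lt : (p - 1) / 2 < p := by have := hp.out.two_le; omega
  have hfac : (Nat.card H).factorization p = 1 := by
    rw [hcardH, Nat.factorization_mul (hp.out.pos).ne' hm_pos.ne', Finsupp.add_apply,
      Nat.Prime.factorization_self hp.out]
    have : ((p - 1) / 2).factorization p = 0 :=
      Nat.factorization_eq_zero_of_not_dvd (fun hdvd => absurd (Nat.le_of_dvd hm_pos hdvd) (by omega))
    simp [this]
  have hTcard : Nat.card (Tsub G htransl) = p ^ (Nat.card H).factorization p := by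
    rw [hfac, pow_one, card_Tsub]
  -- the Sylow subgroup
  let S : Sylow p H := Sylow.ofCard (Tsub G htransl) hTcard
  have hSyl1 : Nat.card (Sylow p H) = 1 := by
    have hdvd := Sylow.card_dvd_index S
    have hindex : (S : Subgroup H).index = (p - 1) / 2 := by
      have := Subgroup.card_mul_index (S : Subgroup H)
      rw [Sylow.coe_ofCard, card_Tsub G htransl, hcardH] at this
      exact Nat.eq_of_mul_eq_mul_left hp.out.pos this
    rw [hindex] at hdvd
    have hmod := card_sylow_modEq_one p H
    have hle : Nat.card (Sylow p H) ≤ (p - 1) / 2 := Nat.le_of_dvd hm_pos hdvd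
    have h1 : Nat.card (Sylow p H) % p = 1 % p := hmod
    have hlt : Nat.card (Sylow p H) < p := lt_of_le_of_lt hle hm_lt
    rw [Nat.mod_eq_of_lt hlt, Nat.mod_eq_of_lt hp.out.one_lt] at h1
    exact h1
  have hsub : Subsingleton (Sylow p H) := (Nat.card_eq_one_iff_unique.mp hSyl1).1
  -- conjugate element
  let h : H := ⟨⟨g, hgG⟩, hgfix⟩
  have hconj : h * (tH G htransl b) * h⁻¹ ∈ (Tsub G htransl) := by
    have h1 : tH G htransl b ∈ (Tsub G htransl) := ⟨Multiplicative.ofAdd b, rfl⟩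
    have h2 : MulAut.conj h • (tH G htransl b) ∈ MulAut.conj h • (Tsub G htransl) :=
      Subgroup.smul_mem_pointwise_smul _ _ _ h1
    have h3 : (h • S : Sylow p H) = S := Subsingleton.elim _ _
    have h4 : ((h • S : Sylow p H) : Subgroup H) = MulAut.conj h • (Tsub G htransl) := by
      rw [Sylow.smul_def, Sylow.pointwise_smul_def, Sylow.coe_ofCard]
    rw [h3, Sylow.coe_ofCard] at h4
    rw [← h4] at h2
    simpa using h2
  obtain ⟨a, ha⟩ := hconj
  refine ⟨a.toAdd, ?_⟩
  have := congrArg (fun x : H => ((x : G) : Equiv.Perm (OnePoint (ZMod p)))) ha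
  exact this.symm

include hp2 htrans hcard htransl in
lemma affine0 : ∀ g ∈ G, g OnePoint.infty = OnePoint.infty →
    ∃ a d : ZMod p, a ≠ 0 ∧ ∀ z : ZMod p, g (OnePoint.some z) = OnePoint.some (a * z + d) := by
  intro g hgG hgfix
  obtain ⟨a, ha⟩ := conj_translation hp2 G htrans hcard htransl g hgG hgfix 1
  -- extract the finite values of g
  have hfin : ∀ z : ZMod p, ∃ w : ZMod p, g (OnePoint.some z) = OnePoint.some w := by
    intro z
    cases hgz : g (OnePoint.some z) with
    | infty => exact absurd hgz (fix_infty_ne hgfix z)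
    | coe w => exact ⟨w, rfl⟩
  choose f hf using hfin
  have hrec : ∀ z : ZMod p, f (z + 1) = f z + a := by
    intro z
    have h1 : (g * ptrans p 1) (OnePoint.some z) = (ptrans p a * g) (OnePoint.some z) := by
      have : g * ptrans p 1 = ptrans p a * g := by
        have := congrArg (fun x => x * g) ha
        simpa [mul_assoc] using this
      rw [this]
    have h2 : g (OnePoint.some (z + 1)) = ptrans p a (OnePoint.some (f z)) := by
      simpa [Equiv.Perm.mul_apply, hf z] using h1
    rw [hf (z + 1)] at h2
    exact some_inj (h2.trans (by simp))
  have hnat : ∀ n : ℕ, f (n : ZMod p) = f 0 + a * n := by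
    intro n
    induction n with
    | zero => simp
    | succ n ih =>
      push_cast
      rw [hrec, ih]
      ring
  have hlin : ∀ z : ZMod p, f z = a * z + f 0 := by
    intro z
    have := hnat z.val
    rwa [ZMod.natCast_val, ZMod.cast_id, add_comm] at this
  have ha0 : a ≠ 0 := by
    intro h0
    have h1 : f 1 = f 0 := by rw [hlin 1, h0, zero_mul, zero_add]
    have h2 : g (OnePoint.some (1 : ZMod p)) = g (OnePoint.some (0 : ZMod p)) := by
      rw [hf 1, hf 0, h1]
    exact one_ne_zero (some_inj (g.injective h2))
  exact ⟨a, f 0, ha0, fun z => by rw [hf z, hlin z]⟩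

end G

lemma pmul_congr {a b : ZMod p} (ha : a ≠ 0) (h : a = b) :
    pmul p a ha = pmul p b (h ▸ ha) := by subst h; rfl

lemma pmul_one : pmul p (1 : ZMod p) one_ne_zero = 1 := by
  apply Equiv.ext
  rintro (_ | z)
  · rfl
  · show OnePoint.some (1 * z) = OnePoint.some z
    rw [one_mul]

lemma pmul_mul {a b : ZMod p} (ha : a ≠ 0) (hb : b ≠ 0) :
    pmul p a ha * pmul p b hb = pmul p (a * b) (mul_ne_zero ha hb) := by
  apply Equiv.ext
  rintro (_ | z)
  · rfl
  · show OnePoint.some (a * (b * z)) = OnePoint.some (a * b * z)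
    rw [mul_assoc]

lemma pmul_inv {a : ZMod p} (ha : a ≠ 0) :
    (pmul p a ha)⁻¹ = pmul p a⁻¹ (inv_ne_zero ha) := by
  apply inv_eq_of_mul_eq_one_right
  rw [pmul_mul, pmul_congr _ (mul_inv_cancel₀ ha), pmul_one]

variable (G : Subgroup (Equiv.Perm (OnePoint (ZMod p)))) in
/-- the subgroup of units whose multiplication map lies in G -/
def Wsub : Subgroup (ZMod p)ˣ where
  carrier := {x | pmul p (x : ZMod p) x.ne_zero ∈ G}
  mul_mem' := by
    intro x y hx hy
    have := G.mul_mem hx hy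
    rw [pmul_mul] at this
    show pmul p ((x * y : (ZMod p)ˣ) : ZMod p) _ ∈ G
    rwa [pmul_congr _ (Units.val_mul x y)]
  one_mem' := by
    show pmul p ((1 : (ZMod p)ˣ) : ZMod p) _ ∈ G
    rw [pmul_congr _ Units.val_one, pmul_one]
    exact G.one_mem
  inv_mem' := by
    intro x hx
    have h1 := G.inv_mem hx
    rw [pmul_inv] at h1
    show pmul p ((x⁻¹ : (ZMod p)ˣ) : ZMod p) _ ∈ G
    rw [pmul_congr _ (Units.val_inv_eq_inv_val x)]
    exact h1

section G2
variable (hp2 : p ≠ 2) (G : Subgroup (Equiv.Perm (OnePoint (ZMod p))))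
  (htrans : ∀ x y : OnePoint (ZMod p), ∃ g ∈ G, g x = y)
  (hcard : Nat.card G = (p ^ 3 - p) / 2)
  (htransl : ∀ a : ZMod p, ptrans p a ∈ G)

include hp2 htrans hcard htransl in
lemma fix_both : ∀ g ∈ G, g OnePoint.infty = OnePoint.infty →
    g (OnePoint.some (0 : ZMod p)) = OnePoint.some (0 : ZMod p) →
    ∃ (c : ZMod p) (hc : c ≠ 0), (∀ z : ZMod p, g (OnePoint.some z) = OnePoint.some (c * z)) ∧
      g = pmul p c hc := by
  intro g hgG hfix hfix0
  obtain ⟨a, d, ha, haff⟩ := affine0 hp2 G htrans hcard htransl g hgG hfix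
  have hd : d = 0 := by
    have := haff 0
    rw [hfix0] at this
    have := some_inj this.symm
    simpa using this
  subst hd
  refine ⟨a, ha, fun z => by rw [haff z, add_zero], ?_⟩
  apply Equiv.ext
  rintro (_ | z)
  · exact hfix
  · show g (OnePoint.some z) = pmul p a ha (OnePoint.some z)
    rw [haff z, add_zero, pmul_some]

include hp2 htrans hcard htransl in
lemma card_Wsub : Nat.card (Wsub G) = (p - 1) / 2 := by
  set K := stabilizer (stabilizer G (OnePoint.infty : OnePoint (ZMod p)))
    (OnePoint.some (0 : ZMod p)) with hK
  have hmem0 : ∀ x : Wsub G,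
      (⟨⟨pmul p (x.1 : ZMod p) x.1.ne_zero, x.2⟩, rfl⟩ :
        stabilizer G (OnePoint.infty : OnePoint (ZMod p))) ∈ K := by
    intro x
    show pmul p (x.1 : ZMod p) x.1.ne_zero (OnePoint.some 0) = OnePoint.some 0
    rw [pmul_some, mul_zero]
  have hbij : Function.Bijective (fun x : Wsub G =>
      (⟨⟨⟨pmul p (x.1 : ZMod p) x.1.ne_zero, x.2⟩, rfl⟩, hmem0 x⟩ : K)) := by
    constructor
    · intro x y hxy
      have h2 := congrArg (fun k : K => (((k : _) : G) : Equiv.Perm (OnePoint (ZMod p)))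
        (OnePoint.some (1 : ZMod p))) hxy
      have h3 : OnePoint.some ((x.1 : ZMod p) * 1) = OnePoint.some ((y.1 : ZMod p) * 1) := h2
      have h4 := some_inj h3
      simp only [mul_one] at h4
      exact Subtype.ext (Units.ext h4)
    · intro k
      obtain ⟨⟨⟨g, hgG⟩, hfix⟩, hfix0⟩ := k
      have hfix' : g OnePoint.infty = OnePoint.infty := hfix
      have hfix0' : g (OnePoint.some (0 : ZMod p)) = OnePoint.some (0 : ZMod p) := by
        have : (⟨⟨g, hgG⟩, hfix⟩ : stabilizer G (OnePoint.infty : OnePoint (ZMod p))) •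
          (OnePoint.some (0 : ZMod p)) = OnePoint.some (0 : ZMod p) := hfix0
        exact this
      obtain ⟨c, hc, hcz, hgeq⟩ := fix_both hp2 G htrans hcard htransl g hgG hfix' hfix0'
      refine ⟨⟨Units.mk0 c hc, ?_⟩, ?_⟩
      · show pmul p ((Units.mk0 c hc : (ZMod p)ˣ) : ZMod p) _ ∈ G
        rw [pmul_congr _ (Units.val_mk0 hc)] at *
        rw [← hgeq]
        exact hgG
      · apply Subtype.ext; apply Subtype.ext; apply Subtype.ext
        show pmul p ((Units.mk0 c hc : (ZMod p)ˣ) : ZMod p) _ = g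
        rw [pmul_congr _ (Units.val_mk0 hc), ← hgeq]
  rw [Nat.card_congr (Equiv.ofBijective _ hbij), hK, cardK hp2 G htrans hcard htransl]

include hp2 in
lemma card_sq_range :
    Nat.card (MonoidHom.range (powMonoidHom 2 : (ZMod p)ˣ →* (ZMod p)ˣ)) = (p - 1) / 2 := by
  set q := (powMonoidHom 2 : (ZMod p)ˣ →* (ZMod p)ˣ) with hq
  have hker : (q.ker : Set (ZMod p)ˣ) = {1, -1} := by
    ext x
    simp only [SetLike.mem_coe, MonoidHom.mem_ker, Set.mem_insert_iff, Set.mem_singleton_iff, hq,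
      powMonoidHom_apply]
    constructor
    · intro hx
      have : ((x : ZMod p)) * (x : ZMod p) = 1 := by
        have := congrArg (Units.val) hx
        rwa [Units.val_pow_eq_pow_val, sq, Units.val_one] at this
      rcases mul_self_eq_one_iff.mp this with h | h
      · left; exact Units.ext (by rw [h, Units.val_one])
      · right; exact Units.ext (by rw [h]; simp)
    · rintro (rfl | rfl)
      · simp
      · apply Units.ext
        rw [Units.val_pow_eq_pow_val]
        simp
  have hne : (1 : (ZMod p)ˣ) ≠ -1 := by
    intro h
    have := congrArg (Units.val) h
    rw [Units.val_one] at this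
    simp only [Units.val_neg, Units.val_one] at this
    have h2 : (2 : ZMod p) = 0 := by linear_combination this
    have hdvd : (p : ℕ) ∣ 2 := by
      have h3 : ((2 : ℕ) : ZMod p) = 0 := by exact_mod_cast h2
      exact (ZMod.natCast_eq_zero_iff 2 p).mp h3
    have := Nat.le_of_dvd (by norm_num) hdvd
    have := hp.out.two_le
    omega
  have hkcard : Nat.card q.ker = 2 := by
    have : Nat.card q.ker = ({1, -1} : Set (ZMod p)ˣ).ncard := by
      rw [← hker]; rw [← Nat.card_coe_set_eq]; rfl
    rw [this, Set.ncard_pair hne]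
  have hucard : Nat.card (ZMod p)ˣ = p - 1 := by
    rw [Nat.card_eq_fintype_card, Fintype.card_units, ZMod.card]
  have hiso := Nat.card_congr (QuotientGroup.quotientKerEquivRange q).toEquiv
  have := Subgroup.card_eq_card_quotient_mul_card_subgroup q.ker
  rw [hucard, hkcard, hiso] at this
  have h2m := two_m (p := p) hp2
  omega

include hp2 htrans hcard htransl in
lemma Wsub_eq_sq : Wsub G = MonoidHom.range (powMonoidHom 2 : (ZMod p)ˣ →* (ZMod p)ˣ) := by
  have hle : MonoidHom.range (powMonoidHom 2 : (ZMod p)ˣ →* (ZMod p)ˣ) ≤ Wsub G := by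
    rintro _ ⟨x, rfl⟩
    have hidx : (Wsub G).index = 2 := by
      have := Subgroup.card_mul_index (Wsub G)
      rw [card_Wsub hp2 G htrans hcard htransl] at this
      rw [Nat.card_eq_fintype_card, Fintype.card_units, ZMod.card] at this
      have h2m := two_m (p := p) hp2
      have hm_pos : 0 < (p - 1) / 2 := by have := hp.out.two_le; omega
      have : (p - 1) / 2 * (Wsub G).index = (p-1)/2 * 2 := by omega
      exact Nat.eq_of_mul_eq_mul_left hm_pos this
    have := Subgroup.pow_index_mem (Wsub G) x
    rwa [hidx] at this
  have hcards : Nat.card (Wsub G) =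
      Nat.card (MonoidHom.range (powMonoidHom 2 : (ZMod p)ˣ →* (ZMod p)ˣ)) := by
    rw [card_Wsub hp2 G htrans hcard htransl, card_sq_range hp2]
  apply le_antisymm _ hle
  intro x hx
  have hset : ((MonoidHom.range (powMonoidHom 2 : (ZMod p)ˣ →* (ZMod p)ˣ)) : Set (ZMod p)ˣ) =
      ((Wsub G) : Set (ZMod p)ˣ) := by
    apply Set.eq_of_subset_of_ncard_le hle
    rw [← Nat.card_coe_set_eq, ← Nat.card_coe_set_eq]
    exact le_of_eq hcards
  rw [← SetLike.mem_coe, ← hset] at hx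
  exact hx

include hp2 htrans hcard htransl in
lemma mulmem_G : ∀ c : ZMod p, (hc : c ≠ 0) → IsSquare c → pmul p c hc ∈ G := by
  intro c hc ⟨b, hb⟩
  have hbne : b ≠ 0 := by rintro rfl; exact hc (by rw [hb, mul_zero])
  have hx : (Units.mk0 b hbne) ^ 2 ∈ Wsub G := by
    rw [Wsub_eq_sq hp2 G htrans hcard htransl]
    exact ⟨Units.mk0 b hbne, rfl⟩
  have hval : (((Units.mk0 b hbne) ^ 2 : (ZMod p)ˣ) : ZMod p) = c := by
    rw [Units.val_pow_eq_pow_val, Units.val_mk0, sq, ← hb]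
  have : pmul p (((Units.mk0 b hbne) ^ 2 : (ZMod p)ˣ) : ZMod p) _ ∈ G := hx
  rwa [pmul_congr _ hval] at this

include hp2 htrans hcard htransl in
lemma fix_both_sq : ∀ g ∈ G, g OnePoint.infty = OnePoint.infty →
    g (OnePoint.some (0 : ZMod p)) = OnePoint.some (0 : ZMod p) →
    ∃ c : ZMod p, c ≠ 0 ∧ IsSquare c ∧
      ∀ z : ZMod p, g (OnePoint.some z) = OnePoint.some (c * z) := by
  intro g hgG hfix hfix0
  obtain ⟨c, hc, hcz, hgeq⟩ := fix_both hp2 G htrans hcard htransl g hgG hfix hfix0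
  refine ⟨c, hc, ?_, hcz⟩
  have hmem : Units.mk0 c hc ∈ Wsub G := by
    show pmul p ((Units.mk0 c hc : (ZMod p)ˣ) : ZMod p) _ ∈ G
    rw [pmul_congr _ (Units.val_mk0 hc), ← hgeq]
    exact hgG
  rw [Wsub_eq_sq hp2 G htrans hcard htransl] at hmem
  obtain ⟨x, hx⟩ := hmem
  refine ⟨(x : ZMod p), ?_⟩
  have := congrArg Units.val hx
  rw [powMonoidHom_apply, Units.val_pow_eq_pow_val, Units.val_mk0, sq] at this
  exact this.symm

include hp2 htrans hcard htransl in
lemma affine_sq : ∀ g ∈ G, g OnePoint.infty = OnePoint.infty →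
    ∃ c d : ZMod p, c ≠ 0 ∧ IsSquare c ∧
      ∀ z : ZMod p, g (OnePoint.some z) = OnePoint.some (c * z + d) := by
  intro g hgG hfix
  obtain ⟨a, d, ha, haff⟩ := affine0 hp2 G htrans hcard htransl g hgG hfix
  set g2 := ptrans p (-d) * g with hg2
  have hg2G : g2 ∈ G := G.mul_mem (htransl (-d)) hgG
  have hg2fix : g2 OnePoint.infty = OnePoint.infty := by
    rw [hg2, Equiv.Perm.mul_apply, hfix, ptrans_infty]
  have hg2z : ∀ z : ZMod p, g2 (OnePoint.some z) = OnePoint.some (a * z) := by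
    intro z
    rw [hg2, Equiv.Perm.mul_apply, haff z, ptrans_some, add_neg_cancel_right]
  have hg2fix0 : g2 (OnePoint.some (0 : ZMod p)) = OnePoint.some (0 : ZMod p) := by
    rw [hg2z 0, mul_zero]
  obtain ⟨c, hc, hcsq, hcz⟩ := fix_both_sq hp2 G htrans hcard htransl g2 hg2G hg2fix hg2fix0
  have hca : c = a := by
    have h1 := hcz 1
    rw [hg2z 1] at h1
    have := some_inj h1
    simpa using this.symm
  subst hca
  exact ⟨c, d, hc, hcsq, haff⟩

end G2

section Tau
variable (hp2 : p ≠ 2) (G : Subgroup (Equiv.Perm (OnePoint (ZMod p))))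
  (htrans : ∀ x y : OnePoint (ZMod p), ∃ g ∈ G, g x = y)
  (hcard : Nat.card G = (p ^ 3 - p) / 2)
  (htransl : ∀ a : ZMod p, ptrans p a ∈ G)
  (τ : Equiv.Perm (OnePoint (ZMod p))) (hτG : τ ∈ G)
  (hτ0 : τ (OnePoint.some (0 : ZMod p)) = OnePoint.infty)
  (hτinf : τ OnePoint.infty = OnePoint.some (0 : ZMod p))

include hp2 htrans hcard htransl hτG hτ0 hτinf in
lemma tau_chi : ∀ z : ZMod p, z ≠ 0 → ∃ w : ZMod p, w ≠ 0 ∧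
    τ (OnePoint.some z) = OnePoint.some w ∧
    quadraticChar (ZMod p) w = quadraticChar (ZMod p) (-1) * quadraticChar (ZMod p) z := by
  set χ := quadraticChar (ZMod p) with hχ
  have hτ0' : τ⁻¹ OnePoint.infty = OnePoint.some (0 : ZMod p) := by
    rw [← hτ0]; exact Equiv.symm_apply_apply τ _
  have hτinf' : τ⁻¹ (OnePoint.some (0 : ZMod p)) = OnePoint.infty := by
    rw [← hτinf]; exact Equiv.symm_apply_apply τ _
  have hfin : ∀ z : ZMod p, ∃ w : ZMod p, z ≠ 0 →
      (τ (OnePoint.some z) = OnePoint.some w ∧ w ≠ 0) := by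
    intro z
    by_cases hz : z = 0
    · exact ⟨0, fun h => absurd hz h⟩
    · cases hτz : τ (OnePoint.some z) with
      | infty => exact absurd (some_inj (τ.injective (hτz.trans hτ0.symm))) hz
      | coe w =>
        refine ⟨w, fun _ => ⟨rfl, ?_⟩⟩
        rintro rfl
        exact some_ne_infty z (τ.injective (hτz.trans hτinf.symm))
  choose f hf using hfin
  -- multiplicativity for square multipliers
  have hmul : ∀ a : ZMod p, a ≠ 0 → IsSquare a → ∀ z : ZMod p, z ≠ 0 →
      χ (f (a * z)) = χ (f z) := by
    intro a ha0 hasq z hz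
    set σ := τ * pmul p a ha0 * τ⁻¹ with hσ
    have hσG : σ ∈ G :=
      G.mul_mem (G.mul_mem hτG (mulmem_G hp2 G htrans hcard htransl a ha0 hasq)) (G.inv_mem hτG)
    have hσinf : σ OnePoint.infty = OnePoint.infty := by
      show τ (pmul p a ha0 (τ⁻¹ OnePoint.infty)) = OnePoint.infty
      rw [hτ0', pmul_some, mul_zero, hτ0]
    have hσ0 : σ (OnePoint.some (0 : ZMod p)) = OnePoint.some (0 : ZMod p) := by
      show τ (pmul p a ha0 (τ⁻¹ (OnePoint.some 0))) = OnePoint.some (0 : ZMod p)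
      rw [hτinf', pmul_infty, hτinf]
    obtain ⟨c, hc, hcsq, hcz⟩ := fix_both_sq hp2 G htrans hcard htransl σ hσG hσinf hσ0
    have e1 : σ (OnePoint.some (f z)) = OnePoint.some (c * f z) := hcz (f z)
    have e2 : σ (OnePoint.some (f z)) = OnePoint.some (f (a * z)) := by
      show τ (pmul p a ha0 (τ⁻¹ (OnePoint.some (f z)))) = OnePoint.some (f (a * z))
      have h1 : τ⁻¹ (OnePoint.some (f z)) = OnePoint.some z := by
        rw [← (hf z hz).1]; exact Equiv.symm_apply_apply τ _
      rw [h1, pmul_some, (hf (a * z) (mul_ne_zero ha0 hz)).1]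
    have e3 : f (a * z) = c * f z := some_inj (e2.symm.trans e1)
    rw [e3, map_mul, (quadraticChar_one_iff_isSquare hc).mpr hcsq, one_mul]
  have hsq_case : ∀ z : ZMod p, z ≠ 0 → IsSquare z → χ (f z) = χ (f 1) := by
    intro z hz hsqz
    have := hmul z hz hsqz 1 one_ne_zero
    rwa [mul_one] at this
  have hinv_chi : ∀ z : ZMod p, z ≠ 0 → ¬IsSquare z → χ z⁻¹ = -1 := by
    intro z hz hns
    have h1 : χ z * χ z⁻¹ = 1 := by
      rw [← map_mul, mul_inv_cancel₀ hz, map_one]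
    rw [quadraticChar_neg_one_iff_not_isSquare.mpr hns] at h1
    omega
  have hns_case : ∀ z w : ZMod p, z ≠ 0 → w ≠ 0 → ¬IsSquare z → ¬IsSquare w →
      χ (f z) = χ (f w) := by
    intro z w hz hw hnz hnw
    set a := w * z⁻¹ with ha
    have ha0 : a ≠ 0 := mul_ne_zero hw (inv_ne_zero hz)
    have hasq : IsSquare a := by
      apply (quadraticChar_one_iff_isSquare ha0).mp
      rw [ha, map_mul, quadraticChar_neg_one_iff_not_isSquare.mpr hnw, hinv_chi z hz hnz]
      norm_num
    have := hmul a ha0 hasq z hz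
    rw [ha, mul_assoc, inv_mul_cancel₀ hz, mul_one] at this
    exact this.symm
  have hu0 : f 1 ≠ 0 := (hf 1 one_ne_zero).2
  have hudich : χ (f 1) = 1 ∨ χ (f 1) = -1 := quadraticChar_dichotomy hu0
  -- a witness value whose character differs from χ (f 1)
  have hwit : ∃ w : ZMod p, w ≠ 0 ∧ χ w = - χ (f 1) := by
    rcases hudich with h | h
    · obtain ⟨w, hw⟩ := FiniteField.exists_nonsquare
        (F := ZMod p) (by rw [ZMod.ringChar_zmod_n]; exact hp2)
      have hw0 : w ≠ 0 := by rintro rfl; exact hw ⟨0, (mul_zero 0).symm⟩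
      exact ⟨w, hw0, by rw [quadraticChar_neg_one_iff_not_isSquare.mpr hw, h]⟩
    · exact ⟨1, one_ne_zero, by rw [map_one, h]; norm_num⟩
  obtain ⟨w, hw0, hwχ⟩ := hwit
  -- surjectivity of f on nonzero elements
  have hsurj : ∃ z : ZMod p, z ≠ 0 ∧ f z = w := by
    have hinj : Function.Injective
        (fun z : {z : ZMod p // z ≠ 0} => (⟨f z.1, (hf z.1 z.2).2⟩ : {z : ZMod p // z ≠ 0})) := by
      intro z z' hzz
      have h1 : f z.1 = f z'.1 := Subtype.ext_iff.mp hzz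
      have h2 : τ (OnePoint.some z.1) = τ (OnePoint.some z'.1) := by
        rw [(hf z.1 z.2).1, (hf z'.1 z'.2).1, h1]
      exact Subtype.ext (some_inj (τ.injective h2))
    have hsur := Finite.injective_iff_surjective.mp hinj
    obtain ⟨z, hz⟩ := hsur ⟨w, hw0⟩
    exact ⟨z.1, z.2, Subtype.ext_iff.mp hz⟩
  obtain ⟨z₀, hz₀0, hz₀⟩ := hsurj
  have hz₀ns : ¬IsSquare z₀ := by
    intro hsq
    have h1 := hsq_case z₀ hz₀0 hsq
    rw [hz₀, hwχ] at h1
    rcases hudich with h | h <;> omega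
  have hns_val : ∀ z : ZMod p, z ≠ 0 → ¬IsSquare z → χ (f z) = - χ (f 1) := by
    intro z hz hns
    rw [hns_case z z₀ hz hz₀0 hns hz₀ns, hz₀, hwχ]
  have hall : ∀ z : ZMod p, z ≠ 0 → χ (f z) = χ (f 1) * χ z := by
    intro z hz
    by_cases hsz : IsSquare z
    · rw [hsq_case z hz hsz, (quadraticChar_one_iff_isSquare hz).mpr hsz, mul_one]
    · rw [hns_val z hz hsz, quadraticChar_neg_one_iff_not_isSquare.mpr hsz]
      ring
  -- now the functional equation pinning down χ (f 1)
  set u := f 1 with hu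
  have hτu : τ (OnePoint.some (1 : ZMod p)) = OnePoint.some u := (hf 1 one_ne_zero).1
  set h := τ⁻¹ * ptrans p (-u) * τ * ptrans p 1 * τ with hh
  have hhG : h ∈ G := by
    exact G.mul_mem (G.mul_mem (G.mul_mem (G.mul_mem (G.inv_mem hτG) (htransl (-u))) hτG)
      (htransl 1)) hτG
  have happ : ∀ x, h x = τ⁻¹ (ptrans p (-u) (τ (ptrans p 1 (τ x)))) := fun x => rfl
  have hhinf : h OnePoint.infty = OnePoint.infty := by
    rw [happ, hτinf, ptrans_some, zero_add, hτu, ptrans_some, add_neg_cancel, hτinf']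
  obtain ⟨c, d, hc, hcsq, haff⟩ := affine_sq hp2 G htrans hcard htransl h hhG hhinf
  -- evaluate at 0
  have e0 : τ⁻¹ (OnePoint.some (-u)) = OnePoint.some d := by
    have h1 := haff 0
    rw [happ, hτ0, ptrans_infty, hτinf, ptrans_some, zero_add] at h1
    rw [h1, mul_zero, zero_add]
  have hd0 : d ≠ 0 := by
    rintro rfl
    have h1 := congrArg τ e0
    rw [show ∀ x, τ (τ⁻¹ x) = x from fun x => Equiv.apply_symm_apply τ x, hτ0] at h1
    exact some_ne_infty (-u) h1
  have hfd : f d = -u := by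
    have h1 := congrArg τ e0
    rw [show ∀ x, τ (τ⁻¹ x) = x from fun x => Equiv.apply_symm_apply τ x, (hf d hd0).1] at h1
    exact (some_inj h1).symm
  have hu0' : u ≠ 0 := hu0
  have hsqB : χ u * χ u = 1 := by
    rcases quadraticChar_dichotomy hu0' with h | h <;> rw [h] <;> norm_num
  have hneg1 : (-1 : ZMod p) ≠ 0 := neg_ne_zero.mpr one_ne_zero
  have hsqA : χ (-1) * χ (-1) = 1 := by
    rcases quadraticChar_dichotomy hneg1 with h | h <;> rw [h] <;> norm_num
  have eq1 : χ (-1) * χ u = χ u * χ d := by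
    have h1 := hall d hd0
    rw [hfd] at h1
    have h2 : χ (-u) = χ (-1) * χ u := by
      rw [show -u = -1 * u by ring, map_mul]
    rw [h2] at h1
    exact h1
  have hχd : χ d = χ (-1) := by linear_combination (-(χ u)) * eq1 + (χ (-1) - χ d) * hsqB
  -- evaluate at z₁
  set z₁ := -(c⁻¹ * d) with hz₁
  have hcz₁ : c * z₁ + d = 0 := by
    rw [hz₁, mul_neg, ← mul_assoc, mul_inv_cancel₀ hc, one_mul, neg_add_cancel]
  have e3 : h (OnePoint.some z₁) = OnePoint.some 0 := by rw [haff z₁, hcz₁]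
  have e4 : ptrans p (-u) (τ (ptrans p 1 (τ (OnePoint.some z₁)))) = OnePoint.infty := by
    have h1 := congrArg τ e3
    rw [happ, show ∀ x, τ (τ⁻¹ x) = x from fun x => Equiv.apply_symm_apply τ x, hτ0] at h1
    exact h1
  have e5 : τ (ptrans p 1 (τ (OnePoint.some z₁))) = OnePoint.infty := by
    apply (ptrans p (-u)).injective
    rw [e4, ptrans_infty]
  have e6 : ptrans p 1 (τ (OnePoint.some z₁)) = OnePoint.some 0 :=
    τ.injective (e5.trans hτ0.symm)
  have hz₁0 : z₁ ≠ 0 := by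
    rintro h0
    rw [h0, hτ0, ptrans_infty] at e6
    exact some_ne_infty (0 : ZMod p) e6.symm
  have hfz₁ : f z₁ = -1 := by
    have h1 : τ (OnePoint.some z₁) = OnePoint.some (f z₁) := (hf z₁ hz₁0).1
    rw [h1, ptrans_some] at e6
    have := some_inj e6
    linear_combination this
  have hcinv : χ c⁻¹ = 1 := by
    apply (quadraticChar_one_iff_isSquare (inv_ne_zero hc)).mpr
    obtain ⟨r, hr⟩ := hcsq
    exact ⟨r⁻¹, by rw [hr, mul_inv]⟩
  have eq2 : χ (-1) = χ u * (χ (-1) * (χ c⁻¹ * χ d)) := by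
    have h1 := hall z₁ hz₁0
    rw [hfz₁] at h1
    have h2 : χ z₁ = χ (-1) * (χ c⁻¹ * χ d) := by
      rw [hz₁, show -(c⁻¹ * d) = -1 * (c⁻¹ * d) by ring, map_mul, map_mul]
    rw [h2] at h1
    exact h1
  have hufinal : χ u = χ (-1) := by
    rw [hcinv, one_mul, hχd] at eq2
    linear_combination (-1 : ℤ) * eq2 + (-(χ u)) * hsqA
  intro z hz
  exact ⟨f z, (hf z hz).2, (hf z hz).1, by rw [hall z hz, hufinal]⟩

end Tau


theorem main
    (p : ℕ) [Fact p.Prime] (hp2 : p ≠ 2)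
    (G : Subgroup (Equiv.Perm (OnePoint (ZMod p))))
    (htrans : ∀ x y : OnePoint (ZMod p), ∃ g ∈ G, g x = y)
    (hcard : Nat.card G = (p ^ 3 - p) / 2)
    (htransl : ∀ a : ZMod p, ptrans p a ∈ G)
    (τ : Equiv.Perm (OnePoint (ZMod p))) (hτG : τ ∈ G)
    (hτ0 : τ (OnePoint.some (0 : ZMod p)) = OnePoint.infty)
    (hτinf : τ OnePoint.infty = OnePoint.some (0 : ZMod p)) :
    (p % 4 = 1 →
      (-1 : ZMod p) ∈ Rset p ∧
      τ '' ((fun z : ZMod p => OnePoint.some z) '' Rset p)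
        = (fun z : ZMod p => OnePoint.some z) '' Rset p ∧
      τ '' ((fun z : ZMod p => OnePoint.some z) '' Nset p)
        = (fun z : ZMod p => OnePoint.some z) '' Nset p) ∧
    (p % 4 = 3 →
      (-1 : ZMod p) ∈ Nset p ∧
      τ '' ((fun z : ZMod p => OnePoint.some z) '' Rset p)
        = (fun z : ZMod p => OnePoint.some z) '' Nset p ∧
      τ '' ((fun z : ZMod p => OnePoint.some z) '' Nset p)
        = (fun z : ZMod p => OnePoint.some z) '' Rset p) := by
  classical
  set χ := quadraticChar (ZMod p) with hχ
  have hone : (-1 : ZMod p) ≠ 0 := neg_ne_zero.mpr one_ne_zero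
  have hmap := tau_chi hp2 G htrans hcard htransl τ hτG hτ0 hτinf
  constructor
  · intro h4
    have hsqneg : IsSquare (-1 : ZMod p) :=
      (ZMod.exists_sq_eq_neg_one_iff (p := p)).mpr (by omega)
    have hA : χ (-1) = 1 := (quadraticChar_one_iff_isSquare hone).mpr hsqneg
    refine ⟨⟨hone, hsqneg⟩, ?_, ?_⟩
    · apply Set.eq_of_subset_of_ncard_le
      · rintro x ⟨y, ⟨zz, hzz, rfl⟩, rfl⟩
        obtain ⟨w, hw0, hτw, hχw⟩ := hmap zz hzz.1
        refine ⟨w, ⟨hw0, ?_⟩, hτw.symm⟩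
        apply (quadraticChar_one_iff_isSquare hw0).mp
        rw [hχw, hA, one_mul]
        exact (quadraticChar_one_iff_isSquare hzz.1).mpr hzz.2
      · rw [Set.ncard_image_of_injective _ τ.injective]
      · exact Set.toFinite _
    · apply Set.eq_of_subset_of_ncard_le
      · rintro x ⟨y, ⟨zz, hzz, rfl⟩, rfl⟩
        obtain ⟨w, hw0, hτw, hχw⟩ := hmap zz hzz.1
        refine ⟨w, ⟨hw0, ?_⟩, hτw.symm⟩
        apply quadraticChar_neg_one_iff_not_isSquare.mp
        rw [hχw, hA, one_mul]
        exact quadraticChar_neg_one_iff_not_isSquare.mpr hzz.2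
      · rw [Set.ncard_image_of_injective _ τ.injective]
      · exact Set.toFinite _
  · intro h4
    have hsqneg : ¬ IsSquare (-1 : ZMod p) := by
      intro h
      have := (ZMod.exists_sq_eq_neg_one_iff (p := p)).mp h
      omega
    have hA : χ (-1) = -1 := quadraticChar_neg_one_iff_not_isSquare.mpr hsqneg
    have subRN : τ '' ((fun z : ZMod p => OnePoint.some z) '' Rset p)
        ⊆ (fun z : ZMod p => OnePoint.some z) '' Nset p := by
      rintro x ⟨y, ⟨zz, hzz, rfl⟩, rfl⟩
      obtain ⟨w, hw0, hτw, hχw⟩ := hmap zz hzz.1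
      refine ⟨w, ⟨hw0, ?_⟩, hτw.symm⟩
      apply quadraticChar_neg_one_iff_not_isSquare.mp
      rw [hχw, hA, (quadraticChar_one_iff_isSquare hzz.1).mpr hzz.2]
      norm_num
    have subNR : τ '' ((fun z : ZMod p => OnePoint.some z) '' Nset p)
        ⊆ (fun z : ZMod p => OnePoint.some z) '' Rset p := by
      rintro x ⟨y, ⟨zz, hzz, rfl⟩, rfl⟩
      obtain ⟨w, hw0, hτw, hχw⟩ := hmap zz hzz.1
      refine ⟨w, ⟨hw0, ?_⟩, hτw.symm⟩
      apply (quadraticChar_one_iff_isSquare hw0).mp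
      rw [hχw, hA, quadraticChar_neg_one_iff_not_isSquare.mpr hzz.2]
      norm_num
    have hcR : (τ '' ((fun z : ZMod p => OnePoint.some z) '' Rset p)).ncard
        = ((fun z : ZMod p => OnePoint.some z) '' Rset p).ncard :=
      Set.ncard_image_of_injective _ τ.injective
    have hcN : (τ '' ((fun z : ZMod p => OnePoint.some z) '' Nset p)).ncard
        = ((fun z : ZMod p => OnePoint.some z) '' Nset p).ncard :=
      Set.ncard_image_of_injective _ τ.injective
    have le1 : ((fun z : ZMod p => OnePoint.some z) '' Rset p).ncard
        ≤ ((fun z : ZMod p => OnePoint.some z) '' Nset p).ncard := by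
      rw [← hcR]; exact Set.ncard_le_ncard subRN
    have le2 : ((fun z : ZMod p => OnePoint.some z) '' Nset p).ncard
        ≤ ((fun z : ZMod p => OnePoint.some z) '' Rset p).ncard := by
      rw [← hcN]; exact Set.ncard_le_ncard subNR
    have heq := le_antisymm le1 le2
    refine ⟨⟨hone, hsqneg⟩, ?_, ?_⟩
    · exact Set.eq_of_subset_of_ncard_le subRN (by rw [hcR]; exact heq.ge)
    · exact Set.eq_of_subset_of_ncard_le subNR (by rw [hcN]; exact heq.le)

end KP

theorem Kbar_and_squares
    (p : ℕ) [Fact p.Prime] (hp2 : p ≠ 2)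
    (G : Subgroup (Equiv.Perm (OnePoint (ZMod p))))
    (htrans : ∀ x y : OnePoint (ZMod p), ∃ g ∈ G, g x = y)
    (hcard : Nat.card G = (p ^ 3 - p) / 2)
    (htransl : ∀ a : ZMod p, ptrans p a ∈ G)
    (τ : Equiv.Perm (OnePoint (ZMod p))) (hτG : τ ∈ G)
    (hτ0 : τ (OnePoint.some (0 : ZMod p)) = OnePoint.infty)
    (hτinf : τ OnePoint.infty = OnePoint.some (0 : ZMod p)) :
    (p % 4 = 1 →
      (-1 : ZMod p) ∈ Rset p ∧
      τ '' ((fun z : ZMod p => OnePoint.some z) '' Rset p)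
        = (fun z : ZMod p => OnePoint.some z) '' Rset p ∧
      τ '' ((fun z : ZMod p => OnePoint.some z) '' Nset p)
        = (fun z : ZMod p => OnePoint.some z) '' Nset p) ∧
    (p % 4 = 3 →
      (-1 : ZMod p) ∈ Nset p ∧
      τ '' ((fun z : ZMod p => OnePoint.some z) '' Rset p)
        = (fun z : ZMod p => OnePoint.some z) '' Nset p ∧
      τ '' ((fun z : ZMod p => OnePoint.some z) '' Nset p)
        = (fun z : ZMod p => OnePoint.some z) '' Rset p) :=
  KP.main p hp2 G htrans hcard htransl τ hτG hτ0 hτinf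
end

section
/- Assume p ≡ 1 (mod 4). Let X be the set of pairs (τ, O) where τ ∈ G and O is an orbit of τ on ℤ/p ∪ {∞} of size exactly 2. Then |X| = ((p² + p)/2) · ((p − 1)/2). -/
instance (X : Type*) [Fintype X] : Fintype (OnePoint X) :=
  inferInstanceAs (Fintype (Option X))

lemma orbit_zpowers_range {α : Type*} (τ : Equiv.Perm α) (x : α) :
    MulAction.orbit (Subgroup.zpowers τ) x = Set.range (fun n : ℤ => (τ ^ n) x) := by
  ext a
  simp only [MulAction.mem_orbit_iff, Subtype.exists, Subgroup.mem_zpowers_iff,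
    Subgroup.smul_def, Equiv.Perm.smul_def, Set.mem_range]
  constructor
  · rintro ⟨g, ⟨n, rfl⟩, h⟩; exact ⟨n, h⟩
  · rintro ⟨n, h⟩; exact ⟨τ ^ n, ⟨n, rfl⟩, h⟩

lemma range_eq_pair {α : Type*} (τ : Equiv.Perm α) (x : α) (h2 : τ (τ x) = x) :
    Set.range (fun n : ℤ => (τ ^ n) x) = {x, τ x} := by
  have h2' : (τ ^ (2:ℤ)) x = x := by
    have : τ ^ (2:ℤ) = τ * τ := by
      rw [show (2:ℤ) = 1 + 1 by norm_num, zpow_add, zpow_one]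
    rw [this]; exact h2
  have key : ∀ m : ℤ, (τ ^ (2 * m)) x = x := by
    intro m
    rw [zpow_mul]
    exact Equiv.Perm.zpow_apply_eq_self_of_apply_eq_self h2' m
  apply Set.Subset.antisymm
  · rintro a ⟨n, rfl⟩
    rcases Int.even_or_odd n with ⟨m, hm⟩ | ⟨m, hm⟩
    · left
      rw [show n = 2 * m by omega]; exact key m
    · right
      simp only []
      rw [show n = 1 + 2 * m by omega, zpow_add, zpow_one, Equiv.Perm.mul_apply, key m]
      exact rfl
  · rintro a (rfl | rfl)
    · exact ⟨0, by simp⟩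
    · exact ⟨1, by simp⟩

lemma orbit_two_iff {α : Type*} (τ : Equiv.Perm α) (O : Set α) :
    ((∃ x, O = MulAction.orbit (Subgroup.zpowers τ) x) ∧ O.ncard = 2) ↔
    ∃ x y, x ≠ y ∧ τ x = y ∧ τ y = x ∧ O = {x, y} := by
  constructor
  · rintro ⟨⟨x, rfl⟩, hc⟩
    rw [orbit_zpowers_range] at hc ⊢
    have hfin : (Set.range (fun n : ℤ => (τ ^ n) x)).Finite := by
      apply Set.finite_of_ncard_ne_zero; omega
    have hτx : τ x ≠ x := by
      intro h
      have : Set.range (fun n : ℤ => (τ ^ n) x) = {x} := by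
        apply Set.Subset.antisymm
        · rintro a ⟨n, rfl⟩
          exact Equiv.Perm.zpow_apply_eq_self_of_apply_eq_self h n
        · rintro a rfl; exact ⟨0, by simp⟩
      rw [this] at hc; simp at hc
    have h2 : τ (τ x) = x := by
      by_contra h2
      have hsub : ({x, τ x, τ (τ x)} : Set α) ⊆ Set.range (fun n : ℤ => (τ ^ n) x) := by
        rintro a (rfl | rfl | rfl)
        · exact ⟨0, by simp⟩
        · exact ⟨1, by simp⟩
        · exact ⟨2, by
            show (τ ^ (2:ℤ)) x = τ (τ x)
            rw [show (2:ℤ) = 1 + 1 by norm_num, zpow_add, zpow_one, Equiv.Perm.mul_apply]⟩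
      have h3 : ({x, τ x, τ (τ x)} : Set α).ncard = 3 := by
        rw [Set.ncard_eq_three]
        exact ⟨x, τ x, τ (τ x), Ne.symm hτx, Ne.symm h2, fun h => hτx (τ.injective h.symm), rfl⟩
      have := Set.ncard_le_ncard hsub hfin
      omega
    exact ⟨x, τ x, Ne.symm hτx, rfl, h2, range_eq_pair τ x h2⟩
  · rintro ⟨x, y, hxy, hx, hy, rfl⟩
    refine ⟨⟨x, ?_⟩, Set.ncard_pair hxy⟩
    rw [orbit_zpowers_range, range_eq_pair τ x (by rw [hx, hy]), hx]

lemma ptrans_infty (p : ℕ) (a : ZMod p) : ptrans p a OnePoint.infty = OnePoint.infty := rfl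

lemma ptrans_some (p : ℕ) (a z : ZMod p) :
    ptrans p a (Option.some z) = Option.some (z + a) := rfl

lemma aux_two_trans (p : ℕ) [Fact p.Prime]
    (G : Subgroup (Equiv.Perm (OnePoint (ZMod p))))
    (htrans : ∀ x y : OnePoint (ZMod p), ∃ g ∈ G, g x = y)
    (htransl : ∀ a : ZMod p, ptrans p a ∈ G) :
    ∀ x y x' y' : OnePoint (ZMod p), x ≠ y → x' ≠ y' →
      ∃ g ∈ G, g x = x' ∧ g y = y' := by
  intro x y x' y' hxy hxy'
  obtain ⟨g1, hg1, hg1x⟩ := htrans x OnePoint.infty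
  obtain ⟨g2, hg2, hg2x⟩ := htrans x' OnePoint.infty
  have h1 : g1 y ≠ OnePoint.infty := fun h => hxy (g1.injective (hg1x.trans h.symm))
  have h2 : g2 y' ≠ OnePoint.infty := fun h => hxy' (g2.injective (hg2x.trans h.symm))
  obtain ⟨a, ha⟩ : ∃ a : ZMod p, g1 y = Option.some a := by
    rcases hy : g1 y with _ | a
    · exact absurd hy h1
    · exact ⟨a, rfl⟩
  obtain ⟨b, hb⟩ : ∃ b : ZMod p, g2 y' = Option.some b := by
    rcases hy : g2 y' with _ | b
    · exact absurd hy h2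
    · exact ⟨b, rfl⟩
  refine ⟨g2⁻¹ * ptrans p (b - a) * g1, mul_mem (mul_mem (inv_mem hg2) (htransl _)) hg1, ?_, ?_⟩
  · rw [Equiv.Perm.mul_apply, Equiv.Perm.mul_apply, hg1x, ptrans_infty, ← hg2x,
      Equiv.Perm.coe_inv, Equiv.symm_apply_apply]
  · show g2⁻¹ (ptrans p (b - a) (g1 y)) = y'
    rw [ha, ptrans_some]
    rw [show a + (b - a) = b by ring, ← hb, Equiv.Perm.coe_inv, Equiv.symm_apply_apply]

lemma aux_k (p : ℕ) [Fact p.Prime] (hp2 : p ≠ 2) :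
    ∃ k : ℕ, 1 ≤ k ∧ p = 2 * k + 1 := by
  have hodd : Odd p := (Fact.out : p.Prime).odd_of_ne_two hp2
  have hp3 : 3 ≤ p := by
    have := (Fact.out : p.Prime).two_le
    rcases hodd with ⟨m, hm⟩
    omega
  rcases hodd with ⟨m, hm⟩
  exact ⟨m, by omega, by omega⟩

lemma aux_cardG (p : ℕ) (k : ℕ) (hk : p = 2 * k + 1) :
    (p ^ 3 - p) / 2 = 4 * k ^ 3 + 6 * k ^ 2 + 2 * k := by
  have h1 : p ^ 3 = 2 * (4 * k ^ 3 + 6 * k ^ 2 + 2 * k) + p := by subst hk; ring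
  have h2 : p ^ 3 - p = 2 * (4 * k ^ 3 + 6 * k ^ 2 + 2 * k) := by omega
  rw [h2, Nat.mul_div_cancel_left _ two_pos]

lemma aux_swapper (p : ℕ) [Fact p.Prime] (hp2 : p ≠ 2)
    (G : Subgroup (Equiv.Perm (OnePoint (ZMod p))))
    (htrans : ∀ x y : OnePoint (ZMod p), ∃ g ∈ G, g x = y)
    (hcard : Nat.card G = (p ^ 3 - p) / 2)
    (htransl : ∀ a : ZMod p, ptrans p a ∈ G) :
    ∀ x y : OnePoint (ZMod p), x ≠ y → ∃ σ ∈ G, σ x = y ∧ σ y = x := by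
  classical
  obtain ⟨k, hk1, hk⟩ := aux_k p hp2
  have hGfin : Fintype G := Fintype.ofFinite _
  have hGcard : Fintype.card G = 4 * k ^ 3 + 6 * k ^ 2 + 2 * k := by
    rw [← Nat.card_eq_fintype_card, hcard, aux_cardG p k hk]
  have hdvd : 2 ∣ Fintype.card G := by
    rw [hGcard]; exact ⟨2 * k ^ 3 + 3 * k ^ 2 + k, by ring⟩
  haveI : Fact (Nat.Prime 2) := ⟨Nat.prime_two⟩
  obtain ⟨σ, hσ⟩ := exists_prime_orderOf_dvd_card 2 hdvd
  have hσ2 : σ ^ 2 = 1 := by rw [← hσ]; exact pow_orderOf_eq_one σ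
  have hσne : σ ≠ 1 := by
    intro h; rw [h, orderOf_one] at hσ; omega
  have hcoene : (σ : Equiv.Perm (OnePoint (ZMod p))) ≠ 1 := by
    intro h; exact hσne (Subtype.ext h)
  obtain ⟨z, hz⟩ : ∃ z, (σ : Equiv.Perm (OnePoint (ZMod p))) z ≠ z := by
    by_contra h
    push_neg at h
    exact hcoene (Equiv.ext h)
  have hσ2' : ∀ w, (σ : Equiv.Perm (OnePoint (ZMod p)))
      ((σ : Equiv.Perm (OnePoint (ZMod p))) w) = w := by
    intro w
    have : ((σ ^ 2 : G) : Equiv.Perm (OnePoint (ZMod p))) = 1 := by rw [hσ2]; rfl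
    calc (σ : Equiv.Perm (OnePoint (ZMod p))) ((σ : Equiv.Perm (OnePoint (ZMod p))) w)
        = ((σ : Equiv.Perm (OnePoint (ZMod p))) * (σ : Equiv.Perm (OnePoint (ZMod p)))) w := rfl
      _ = ((σ ^ 2 : G) : Equiv.Perm (OnePoint (ZMod p))) w := by rw [Subgroup.coe_pow]; rw [sq]
      _ = w := by rw [this]; rfl
  intro x y hxy
  have hzw : z ≠ (σ : Equiv.Perm (OnePoint (ZMod p))) z := fun h => hz h.symm
  obtain ⟨g, hg, hgz, hgw⟩ := aux_two_trans p G htrans htransl z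
    ((σ : Equiv.Perm (OnePoint (ZMod p))) z) x y hzw hxy
  refine ⟨g * σ * g⁻¹, mul_mem (mul_mem hg σ.2) (inv_mem hg), ?_, ?_⟩
  · simp only [Equiv.Perm.mul_apply]
    rw [← hgz, Equiv.Perm.coe_inv, Equiv.symm_apply_apply, hgw]
  · simp only [Equiv.Perm.mul_apply]
    rw [← hgw, Equiv.Perm.coe_inv, Equiv.symm_apply_apply, hσ2', hgz]

lemma aux_fiber (p : ℕ) [Fact p.Prime] (hp2 : p ≠ 2)
    (G : Subgroup (Equiv.Perm (OnePoint (ZMod p))))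
    (htrans : ∀ x y : OnePoint (ZMod p), ∃ g ∈ G, g x = y)
    (hcard : Nat.card G = (p ^ 3 - p) / 2)
    (htransl : ∀ a : ZMod p, ptrans p a ∈ G)
    (x y : OnePoint (ZMod p)) (hxy : x ≠ y) :
    Nat.card {τ : Equiv.Perm (OnePoint (ZMod p)) // τ ∈ G ∧ τ x = y ∧ τ y = x}
      = (p - 1) / 2 := by
  classical
  haveI : NeZero p := ⟨(Fact.out : p.Prime).pos.ne'⟩
  obtain ⟨k, hk1, hk⟩ := aux_k p hp2
  obtain ⟨σ, hσG, hσx, hσy⟩ := aux_swapper p hp2 G htrans hcard htransl x y hxy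
  -- the swap coset is equinumerous with the two-point stabilizer
  have e1 : {τ : Equiv.Perm (OnePoint (ZMod p)) // τ ∈ G ∧ τ x = x ∧ τ y = y}
      ≃ {τ : Equiv.Perm (OnePoint (ZMod p)) // τ ∈ G ∧ τ x = y ∧ τ y = x} := by
    refine ⟨fun t => ⟨σ * t.1, mul_mem hσG t.2.1, ?_, ?_⟩,
            fun t => ⟨σ⁻¹ * t.1, mul_mem (inv_mem hσG) t.2.1, ?_, ?_⟩, ?_, ?_⟩
    · rw [Equiv.Perm.mul_apply, t.2.2.1, hσx]
    · rw [Equiv.Perm.mul_apply, t.2.2.2, hσy]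
    · rw [Equiv.Perm.mul_apply, t.2.2.1, ← hσx, Equiv.Perm.coe_inv, Equiv.symm_apply_apply]
    · rw [Equiv.Perm.mul_apply, t.2.2.2, ← hσy, Equiv.Perm.coe_inv, Equiv.symm_apply_apply]
    · intro t; apply Subtype.ext; simp [← mul_assoc]
    · intro t; apply Subtype.ext; simp [← mul_assoc]
  -- stabilizer description
  have hsmul : ∀ (τ : Equiv.Perm (OnePoint (ZMod p))) (h : τ ∈ G)
      (q : OnePoint (ZMod p) × OnePoint (ZMod p)),
      (⟨τ, h⟩ : G) • q = (τ q.1, τ q.2) := fun τ h q => rfl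
  have e2 : {τ : Equiv.Perm (OnePoint (ZMod p)) // τ ∈ G ∧ τ x = x ∧ τ y = y}
      ≃ MulAction.stabilizer G ((x, y) : OnePoint (ZMod p) × OnePoint (ZMod p)) := by
    refine ⟨fun t => ⟨⟨t.1, t.2.1⟩, ?_⟩, fun s => ⟨(s.1 : Equiv.Perm _), s.1.2, ?_, ?_⟩, ?_, ?_⟩
    · rw [MulAction.mem_stabilizer_iff, hsmul t.1 t.2.1, t.2.2.1, t.2.2.2]
    · have h := s.2
      rw [MulAction.mem_stabilizer_iff] at h
      have h2 : ((s.1 : Equiv.Perm _) x, (s.1 : Equiv.Perm _) y) = (x, y) := h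
      exact (Prod.ext_iff.mp h2).1
    · have h := s.2
      rw [MulAction.mem_stabilizer_iff] at h
      have h2 : ((s.1 : Equiv.Perm _) x, (s.1 : Equiv.Perm _) y) = (x, y) := h
      exact (Prod.ext_iff.mp h2).2
    · intro t; rfl
    · intro s; rfl
  -- the orbit of (x,y) is the set of distinct pairs
  have horb : MulAction.orbit G ((x, y) : OnePoint (ZMod p) × OnePoint (ZMod p))
      = {q : OnePoint (ZMod p) × OnePoint (ZMod p) | q.1 ≠ q.2} := by
    ext q
    constructor
    · rintro ⟨⟨g, hg⟩, rfl⟩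
      exact fun h => hxy (g.injective h)
    · intro hq
      obtain ⟨g, hg, h1, h2⟩ := aux_two_trans p G htrans htransl x y q.1 q.2 hxy hq
      exact ⟨⟨g, hg⟩, show ((g x, g y) : _ × _) = q from Prod.ext h1 h2⟩
  haveI : Fintype G := Fintype.ofFinite _
  haveI : Fintype (MulAction.orbit G ((x, y) : OnePoint (ZMod p) × OnePoint (ZMod p))) :=
    Fintype.ofFinite _
  haveI : Fintype (MulAction.stabilizer G ((x, y) : OnePoint (ZMod p) × OnePoint (ZMod p))) :=
    Fintype.ofFinite _
  have hOS := MulAction.card_orbit_mul_card_stabilizer_eq_card_group G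
    ((x, y) : OnePoint (ZMod p) × OnePoint (ZMod p))
  rw [← Nat.card_eq_fintype_card, ← Nat.card_eq_fintype_card, ← Nat.card_eq_fintype_card] at hOS
  -- card of the orbit
  have hNα : Nat.card (OnePoint (ZMod p)) = p + 1 := by
    have e : OnePoint (ZMod p) ≃ Option (ZMod p) := Equiv.refl _
    rw [Nat.card_congr e, Nat.card_eq_fintype_card, Fintype.card_option, ZMod.card]
  have hdiag : Nat.card {q : OnePoint (ZMod p) × OnePoint (ZMod p) // q.1 = q.2}
      = p + 1 := by
    rw [← hNα]
    exact Nat.card_congr ⟨fun q => q.1.1, fun a => ⟨(a, a), rfl⟩,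
      fun q => by obtain ⟨⟨a, b⟩, h⟩ := q; cases h; rfl, fun a => rfl⟩
  have hcompl : Nat.card {q : OnePoint (ZMod p) × OnePoint (ZMod p) // q.1 ≠ q.2}
      = (p + 1) * (p + 1) - (p + 1) := by
    haveI : Fintype {q : OnePoint (ZMod p) × OnePoint (ZMod p) // q.1 = q.2} :=
      Fintype.ofFinite _
    haveI : Fintype {q : OnePoint (ZMod p) × OnePoint (ZMod p) // ¬ q.1 = q.2} :=
      Fintype.ofFinite _
    have h := Fintype.card_subtype_compl (fun q : OnePoint (ZMod p) × OnePoint (ZMod p) => q.1 = q.2)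
    rw [← Nat.card_eq_fintype_card, ← Nat.card_eq_fintype_card, ← Nat.card_eq_fintype_card] at h
    rw [h, hdiag, Nat.card_prod, hNα]
  have horbcard : Nat.card (MulAction.orbit G ((x, y) : OnePoint (ZMod p) × OnePoint (ZMod p)))
      = 4 * k ^ 2 + 6 * k + 2 := by
    rw [horb]
    have h1 : Nat.card {q : OnePoint (ZMod p) × OnePoint (ZMod p) | q.1 ≠ q.2}
        = Nat.card {q : OnePoint (ZMod p) × OnePoint (ZMod p) // q.1 ≠ q.2} := rfl
    rw [h1, hcompl]
    have h2 : (p + 1) * (p + 1) = (4 * k ^ 2 + 6 * k + 2) + (p + 1) := by subst hk; ring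
    exact Nat.sub_eq_of_eq_add h2
  rw [horbcard, hcard, aux_cardG p k hk] at hOS
  have hstab : Nat.card (MulAction.stabilizer G ((x, y) : OnePoint (ZMod p) × OnePoint (ZMod p)))
      = k := by
    have hpos : 0 < 4 * k ^ 2 + 6 * k + 2 := by positivity
    apply Nat.eq_of_mul_eq_mul_left hpos
    rw [hOS]; ring
  rw [← Nat.card_congr e1, Nat.card_congr e2, hstab]
  omega

lemma sigma_subtype_eq {A B : Type*} {P : A → Prop} {Q : A → B → Prop}
    (x y : Σ a : {a : A // P a}, {b : B // Q a.1 b})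
    (h1 : x.1.1 = y.1.1) (h2 : x.2.1 = y.2.1) : x = y := by
  obtain ⟨⟨a, ha⟩, ⟨b, hb⟩⟩ := x
  obtain ⟨⟨a', ha'⟩, ⟨b', hb'⟩⟩ := y
  dsimp at h1 h2
  subst h1; subst h2
  rfl

theorem card_pairs_with_two_orbit
    (p : ℕ) [Fact p.Prime] (hp2 : p ≠ 2) (hp1 : p % 4 = 1)
    (G : Subgroup (Equiv.Perm (OnePoint (ZMod p))))
    (htrans : ∀ x y : OnePoint (ZMod p), ∃ g ∈ G, g x = y)
    (hcard : Nat.card G = (p ^ 3 - p) / 2)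
    (htransl : ∀ a : ZMod p, ptrans p a ∈ G) :
    Set.ncard {q : Equiv.Perm (OnePoint (ZMod p)) × Set (OnePoint (ZMod p)) |
        q.1 ∈ G ∧ (∃ x, q.2 = MulAction.orbit (Subgroup.zpowers q.1) x) ∧ q.2.ncard = 2}
      = ((p ^ 2 + p) / 2) * ((p - 1) / 2) := by
  classical
  haveI : NeZero p := ⟨(Fact.out : p.Prime).pos.ne'⟩
  obtain ⟨k, hk1, hk⟩ := aux_k p hp2
  have hXeq : {q : Equiv.Perm (OnePoint (ZMod p)) × Set (OnePoint (ZMod p)) |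
        q.1 ∈ G ∧ (∃ x, q.2 = MulAction.orbit (Subgroup.zpowers q.1) x) ∧ q.2.ncard = 2}
      = {q : Equiv.Perm (OnePoint (ZMod p)) × Set (OnePoint (ZMod p)) |
        q.1 ∈ G ∧ ∃ x y, x ≠ y ∧ q.1 x = y ∧ q.1 y = x ∧ q.2 = {x, y}} :=
    Set.ext fun q => and_congr_right fun _ => orbit_two_iff q.1 q.2
  rw [← Nat.card_coe_set_eq, hXeq]
  -- the sigma type of (2-element finset, swapping element of G)
  have e : {q : Equiv.Perm (OnePoint (ZMod p)) × Set (OnePoint (ZMod p)) //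
        q.1 ∈ G ∧ ∃ x y, x ≠ y ∧ q.1 x = y ∧ q.1 y = x ∧ q.2 = {x, y}}
      ≃ Σ s : {s : Finset (OnePoint (ZMod p)) // s.card = 2},
          {τ : Equiv.Perm (OnePoint (ZMod p)) //
            τ ∈ G ∧ ∀ a ∈ s.1, τ a ∈ s.1 ∧ τ a ≠ a} := by
    refine ⟨fun t => ⟨⟨(Set.toFinite t.1.2).toFinset, ?_⟩, ⟨t.1.1, t.2.1, ?_⟩⟩,
            fun s => ⟨(s.2.1, (s.1.1 : Set (OnePoint (ZMod p)))), s.2.2.1, ?_⟩, ?_, ?_⟩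
    · obtain ⟨x, y, hxy, h1, h2, hO⟩ := t.2.2
      rw [← Set.ncard_eq_toFinset_card, hO]
      exact Set.ncard_pair hxy
    · intro a ha
      rw [Set.Finite.mem_toFinset] at ha
      obtain ⟨x, y, hxy, h1, h2, hO⟩ := t.2.2
      rw [hO] at ha
      rcases ha with rfl | rfl
      · constructor
        · rw [Set.Finite.mem_toFinset, hO, h1]; right; rfl
        · rw [h1]; exact fun h => hxy h.symm
      · constructor
        · rw [Set.Finite.mem_toFinset, hO, h2]; left; rfl
        · rw [h2]; exact hxy
    · obtain ⟨⟨s1, hs1⟩, ⟨τ, hτG, hτs⟩⟩ := s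
      obtain ⟨x, y, hxy, hs⟩ := Finset.card_eq_two.mp hs1
      subst hs
      refine ⟨x, y, hxy, ?_, ?_, ?_⟩
      · have := hτs x (Finset.mem_insert_self x {y})
        rw [Finset.mem_insert, Finset.mem_singleton] at this
        rcases this with ⟨(h | h), hne⟩
        · exact absurd h hne
        · exact h
      · have := hτs y (Finset.mem_insert_of_mem (Finset.mem_singleton_self y))
        rw [Finset.mem_insert, Finset.mem_singleton] at this
        rcases this with ⟨(h | h), hne⟩
        · exact h
        · exact absurd h hne
      · show ((({x, y} : Finset (OnePoint (ZMod p))) : Set (OnePoint (ZMod p)))) = {x, y}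
        simp
    · intro t
      apply Subtype.ext
      exact Prod.ext rfl (Set.Finite.coe_toFinset _)
    · intro s
      apply sigma_subtype_eq (Q := fun (s : Finset (OnePoint (ZMod p)))
          (τ : Equiv.Perm (OnePoint (ZMod p))) => τ ∈ G ∧ ∀ a ∈ s, τ a ∈ s ∧ τ a ≠ a)
      · exact Finset.coe_injective (Set.Finite.coe_toFinset _)
      · rfl
  have hce : Nat.card {q : Equiv.Perm (OnePoint (ZMod p)) × Set (OnePoint (ZMod p)) |
        q.1 ∈ G ∧ ∃ x y, x ≠ y ∧ q.1 x = y ∧ q.1 y = x ∧ q.2 = {x, y}}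
      = Nat.card (Σ s : {s : Finset (OnePoint (ZMod p)) // s.card = 2},
          {τ : Equiv.Perm (OnePoint (ZMod p)) //
            τ ∈ G ∧ ∀ a ∈ s.1, τ a ∈ s.1 ∧ τ a ≠ a}) := Nat.card_congr e
  rw [hce]
  rw [Nat.card_eq_fintype_card, Fintype.card_sigma]
  have hfib : ∀ s : {s : Finset (OnePoint (ZMod p)) // s.card = 2},
      Fintype.card {τ : Equiv.Perm (OnePoint (ZMod p)) //
        τ ∈ G ∧ ∀ a ∈ s.1, τ a ∈ s.1 ∧ τ a ≠ a} = k := by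
    intro s
    obtain ⟨x, y, hxy, hs⟩ := Finset.card_eq_two.mp s.2
    rw [← Nat.card_eq_fintype_card]
    have heq : ∀ τ : Equiv.Perm (OnePoint (ZMod p)),
        (τ ∈ G ∧ ∀ a ∈ s.1, τ a ∈ s.1 ∧ τ a ≠ a) ↔ (τ ∈ G ∧ τ x = y ∧ τ y = x) := by
      intro τ
      apply and_congr_right
      intro _
      rw [hs]
      constructor
      · intro h
        have h1 := h x (Finset.mem_insert_self x {y})
        have h2 := h y (Finset.mem_insert_of_mem (Finset.mem_singleton_self y))
        rw [Finset.mem_insert, Finset.mem_singleton] at h1 h2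
        refine ⟨?_, ?_⟩
        · rcases h1 with ⟨(h | h), hne⟩; exacts [absurd h hne, h]
        · rcases h2 with ⟨(h | h), hne⟩; exacts [h, absurd h hne]
      · rintro ⟨h1, h2⟩ a ha
        rw [Finset.mem_insert, Finset.mem_singleton] at ha
        rcases ha with rfl | rfl
        · rw [h1]
          exact ⟨by simp, fun h => hxy h.symm⟩
        · rw [h2]
          exact ⟨by simp, hxy⟩
    rw [Nat.card_congr (Equiv.subtypeEquivRight heq), aux_fiber p hp2 G htrans hcard htransl x y hxy]
    omega
  rw [Finset.sum_congr rfl (fun s _ => hfib s), Finset.sum_const, smul_eq_mul]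
  have hcardα : Fintype.card (OnePoint (ZMod p)) = p + 1 := by
    rw [← Nat.card_eq_fintype_card]
    have e2 : OnePoint (ZMod p) ≃ Option (ZMod p) := Equiv.refl _
    rw [Nat.card_congr e2, Nat.card_eq_fintype_card, Fintype.card_option, ZMod.card]
  have hA : Fintype.card {s : Finset (OnePoint (ZMod p)) // s.card = 2} = 2 * k ^ 2 + 3 * k + 1 := by
    have h := Fintype.card_finset_len (α := OnePoint (ZMod p)) 2
    rw [← Nat.card_eq_fintype_card] at h ⊢
    rw [h, hcardα, Nat.choose_two_right]
    have h2 : (p + 1) * (p + 1 - 1) = 2 * (2 * k ^ 2 + 3 * k + 1) := by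
      rw [Nat.add_sub_cancel]; subst hk; ring
    rw [h2, Nat.mul_div_cancel_left _ two_pos]
  rw [Finset.card_univ, hA]
  have hq1 : (p ^ 2 + p) / 2 = 2 * k ^ 2 + 3 * k + 1 := by
    have h2 : p ^ 2 + p = 2 * (2 * k ^ 2 + 3 * k + 1) := by subst hk; ring
    rw [h2, Nat.mul_div_cancel_left _ two_pos]
  have hq2 : (p - 1) / 2 = k := by omega
  rw [hq1, hq2]
end

section
/- Assume p ≡ 1 (mod 4). Then for every τ ∈ K̄ and every σ ∈ K one has τστ⁻¹ = σ⁻¹; equivalently, τ(a·z) = a⁻¹ · τ(z) for all a ∈ R and all z ∈ (ℤ/p)*. -/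
open Equiv

namespace KbarAux

instance {X : Type*} [Finite X] : Finite (OnePoint X) := by
  have := Fintype.ofFinite X
  exact inferInstanceAs (Finite (Option X))

lemma op_cases {Y : Type*} (x : OnePoint Y) : x = OnePoint.infty ∨ ∃ a : Y, x = OnePoint.some a :=
  Option.rec (Or.inl rfl) (fun a => Or.inr ⟨a, rfl⟩) x

lemma some_inj {Y : Type*} {a b : Y} (h : OnePoint.some a = OnePoint.some b) : a = b :=
  Option.some.inj h

lemma some_ne_infty {Y : Type*} (a : Y) : OnePoint.some a ≠ OnePoint.infty :=
  fun h => by cases h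

variable {p : ℕ}

lemma ptrans_some (a z : ZMod p) : ptrans p a (OnePoint.some z) = OnePoint.some (z + a) := rfl

lemma ptrans_infty (a : ZMod p) : ptrans p a OnePoint.infty = OnePoint.infty := rfl

lemma ptrans_mul (a b : ZMod p) : ptrans p a * ptrans p b = ptrans p (a + b) := by
  apply Equiv.ext
  intro x
  rcases op_cases x with rfl | ⟨z, rfl⟩
  · rfl
  · show OnePoint.some (z + b + a) = OnePoint.some (z + (a + b))
    rw [add_assoc, add_comm b a]

lemma ptrans_zero : ptrans p 0 = 1 := by
  apply Equiv.ext
  intro x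
  rcases op_cases x with rfl | ⟨z, rfl⟩
  · rfl
  · show OnePoint.some (z + 0) = OnePoint.some z
    rw [add_zero]

lemma ptrans_npow (a : ZMod p) (n : ℕ) : ptrans p a ^ n = ptrans p (n * a) := by
  induction n with
  | zero => simpa using ptrans_zero.symm
  | succ n ih =>
      rw [pow_succ, ih, ptrans_mul]
      congr 1
      push_cast
      ring

lemma ptrans_inv (a : ZMod p) : (ptrans p a)⁻¹ = ptrans p (-a) := by
  apply inv_eq_of_mul_eq_one_right
  rw [ptrans_mul, add_neg_cancel, ptrans_zero]

lemma ptrans_zpow (j : ℤ) : ptrans p 1 ^ j = ptrans p (j : ZMod p) := by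
  cases j with
  | ofNat n => rw [Int.ofNat_eq_coe, zpow_natCast, ptrans_npow, mul_one]; norm_num
  | negSucc n =>
      rw [zpow_negSucc, ptrans_npow, mul_one, ptrans_inv]
      congr 1
      push_cast
      ring

lemma orderOf_ptrans [Fact p.Prime] : orderOf (ptrans p 1) = p := by
  apply orderOf_eq_prime
  · rw [ptrans_npow, mul_one, ZMod.natCast_self, ptrans_zero]
  · intro h
    have := congrArg (fun g : Equiv.Perm (OnePoint (ZMod p)) => g (OnePoint.some 0)) h
    simp only [ptrans_some, Equiv.Perm.one_apply, zero_add] at this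
    exact one_ne_zero (some_inj this)

lemma card_helper {X : Type*} [Finite X] (H : Subgroup (Equiv.Perm X)) (x : X) :
    Nat.card {g : Equiv.Perm X // g ∈ H ∧ g x = x} *
      Nat.card {y : X // ∃ g, g ∈ H ∧ g x = y} = Nat.card H := by
  classical
  set O := {y : X // ∃ g, g ∈ H ∧ g x = y} with hO
  set St := {g : Equiv.Perm X // g ∈ H ∧ g x = x} with hSt
  have hsmem : ∀ y : O, (Classical.choose y.2) ∈ H ∧ (Classical.choose y.2) x = y.1 :=
    fun y => Classical.choose_spec y.2
  set s : O → Equiv.Perm X := fun y => Classical.choose y.2 with hs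
  let Φ : St × O → H := fun t => ⟨s t.2 * t.1.1, mul_mem (hsmem t.2).1 t.1.2.1⟩
  have hbij : Function.Bijective Φ := by
    constructor
    · rintro ⟨t, y⟩ ⟨t', y'⟩ h
      have h' : s y * t.1 = s y' * t'.1 := congrArg Subtype.val h
      have hyy : y.1 = y'.1 := by
        have h2 := congrArg (fun g : Equiv.Perm X => g x) h'
        simp only [Equiv.Perm.mul_apply] at h2
        rw [t.2.2, t'.2.2] at h2
        rw [← (hsmem y).2, ← (hsmem y').2, h2]
      have hy : y = y' := Subtype.ext hyy
      subst hy
      have ht : t.1 = t'.1 := mul_left_cancel h'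
      exact Prod.ext (Subtype.ext ht) rfl
    · rintro ⟨g, hg⟩
      have hyO : ∃ g', g' ∈ H ∧ g' x = g x := ⟨g, hg, rfl⟩
      refine ⟨⟨⟨(s ⟨g x, hyO⟩)⁻¹ * g, mul_mem (inv_mem (hsmem ⟨g x, hyO⟩).1) hg, ?_⟩,
        ⟨g x, hyO⟩⟩, ?_⟩
      · show ((s ⟨g x, hyO⟩)⁻¹ * g) x = x
        have h2 : s ⟨g x, hyO⟩ x = g x := (hsmem ⟨g x, hyO⟩).2
        have h3 := Equiv.symm_apply_apply (s ⟨g x, hyO⟩) x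
        rw [h2] at h3
        exact h3
      · apply Subtype.ext
        show s ⟨g x, hyO⟩ * ((s ⟨g x, hyO⟩)⁻¹ * g) = g
        rw [mul_inv_cancel_left]
  calc Nat.card St * Nat.card O = Nat.card (St × O) := (Nat.card_prod _ _).symm
    _ = Nat.card H := Nat.card_congr (Equiv.ofBijective Φ hbij)


/-- The subgroup of `G` fixing `∞`. -/
def GinfSub (p : ℕ) (G : Subgroup (Equiv.Perm (OnePoint (ZMod p)))) :
    Subgroup (Equiv.Perm (OnePoint (ZMod p))) where
  carrier := {g | g ∈ G ∧ g OnePoint.infty = OnePoint.infty}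
  one_mem' := ⟨one_mem G, rfl⟩
  mul_mem' := by
    rintro a b ⟨haG, hai⟩ ⟨hbG, hbi⟩
    exact ⟨mul_mem haG hbG, by rw [Equiv.Perm.mul_apply, hbi, hai]⟩
  inv_mem' := by
    rintro a ⟨haG, hai⟩
    refine ⟨inv_mem haG, ?_⟩
    have h := Equiv.symm_apply_apply a OnePoint.infty
    rw [hai] at h
    exact h

/-- The subgroup of `G` fixing `∞` and `0`. -/
def KSub (p : ℕ) (G : Subgroup (Equiv.Perm (OnePoint (ZMod p)))) :
    Subgroup (Equiv.Perm (OnePoint (ZMod p))) where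
  carrier := {g | g ∈ G ∧ g OnePoint.infty = OnePoint.infty ∧
    g (OnePoint.some 0) = OnePoint.some 0}
  one_mem' := ⟨one_mem G, rfl, rfl⟩
  mul_mem' := by
    rintro a b ⟨haG, hai, ha0⟩ ⟨hbG, hbi, hb0⟩
    exact ⟨mul_mem haG hbG, by rw [Equiv.Perm.mul_apply, hbi, hai],
      by rw [Equiv.Perm.mul_apply, hb0, ha0]⟩
  inv_mem' := by
    rintro a ⟨haG, hai, ha0⟩
    refine ⟨inv_mem haG, ?_, ?_⟩
    · have h := Equiv.symm_apply_apply a OnePoint.infty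
      rw [hai] at h
      exact h
    · have h := Equiv.symm_apply_apply a (OnePoint.some 0)
      rw [ha0] at h
      exact h

lemma cards [Fact p.Prime] (hp2 : p ≠ 2)
    (G : Subgroup (Equiv.Perm (OnePoint (ZMod p))))
    (htrans : ∀ x y : OnePoint (ZMod p), ∃ g ∈ G, g x = y)
    (hcard : Nat.card G = (p ^ 3 - p) / 2)
    (htransl : ∀ a : ZMod p, ptrans p a ∈ G) :
    Nat.card (GinfSub p G) = p * ((p - 1) / 2) ∧
      Nat.card (KSub p G) = (p - 1) / 2 := by
  have hp : p.Prime := Fact.out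
  have hodd : Odd p := hp.odd_of_ne_two hp2
  obtain ⟨s, hs⟩ := hodd
  have hm : (p - 1) / 2 = s := by omega
  have hcardX : Nat.card (OnePoint (ZMod p)) = p + 1 := by
    have e : OnePoint (ZMod p) ≃ Option (ZMod p) := Equiv.refl _
    rw [Nat.card_congr e, Finite.card_option, Nat.card_zmod]
  have hcard' : Nat.card G = ((p - 1) / 2 * p) * (p + 1) := by
    rw [hcard, hm, hs]
    have h3 : (2*s+1)^3 - (2*s+1) = 2 * (s * (2*s+1) * ((2*s+1) + 1)) := by
      have h4 : (2*s+1)^3 = 2 * (s * (2*s+1) * ((2*s+1) + 1)) + (2*s+1) := by ring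
      omega
    rw [h3, Nat.mul_div_cancel_left _ (by norm_num)]
  have h1 := card_helper G OnePoint.infty
  have hO1 : Nat.card {y : OnePoint (ZMod p) // ∃ g, g ∈ G ∧ g OnePoint.infty = y} = p + 1 := by
    rw [Nat.card_congr (Equiv.subtypeUnivEquiv (fun y => htrans OnePoint.infty y)), hcardX]
  rw [hO1, hcard'] at h1
  have hSt1 : Nat.card {g : Equiv.Perm (OnePoint (ZMod p)) //
      g ∈ G ∧ g OnePoint.infty = OnePoint.infty} = (p - 1) / 2 * p :=
    Nat.eq_of_mul_eq_mul_right (by omega) h1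
  have hGinf : Nat.card (GinfSub p G) = (p - 1) / 2 * p := by
    rw [← hSt1]
    exact Nat.card_congr (Equiv.subtypeEquivRight (fun g => Iff.rfl))
  have h2 := card_helper (GinfSub p G) (OnePoint.some (0 : ZMod p))
  have hO2 : Nat.card {y : OnePoint (ZMod p) //
      ∃ g, g ∈ GinfSub p G ∧ g (OnePoint.some 0) = y} = p := by
    have e : ZMod p ≃ {y : OnePoint (ZMod p) //
        ∃ g, g ∈ GinfSub p G ∧ g (OnePoint.some 0) = y} := by
      apply Equiv.ofBijective (fun a => ⟨OnePoint.some a, ptrans p a, ⟨htransl a, rfl⟩, by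
        rw [ptrans_some, zero_add]⟩)
      constructor
      · intro a b h
        exact some_inj (congrArg Subtype.val h)
      · rintro ⟨y, g, ⟨hgG, hgi⟩, hgy⟩
        rcases op_cases y with rfl | ⟨a, rfl⟩
        · exfalso
          exact some_ne_infty _ (g.injective (hgy.trans hgi.symm))
        · exact ⟨a, rfl⟩
    rw [Nat.card_congr e.symm, Nat.card_zmod]
  rw [hO2, hGinf] at h2
  have hSt2 : Nat.card {g : Equiv.Perm (OnePoint (ZMod p)) //
      g ∈ GinfSub p G ∧ g (OnePoint.some 0) = OnePoint.some 0} = (p - 1) / 2 := by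
    apply Nat.eq_of_mul_eq_mul_right (show 0 < p from hp.pos)
    rw [h2]
  constructor
  · rw [hGinf]; ring
  · rw [← hSt2]
    apply Nat.card_congr
    apply Equiv.subtypeEquivRight
    intro g
    exact ⟨fun ⟨a, b, c⟩ => ⟨⟨a, b⟩, c⟩, fun ⟨⟨a, b⟩, c⟩ => ⟨a, b, c⟩⟩

lemma scalar_of_fixes [Fact p.Prime]
    (G : Subgroup (Equiv.Perm (OnePoint (ZMod p))))
    (htransl : ∀ a : ZMod p, ptrans p a ∈ G)
    (hGinf : Nat.card (GinfSub p G) = p * ((p - 1) / 2))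
    (σ : Equiv.Perm (OnePoint (ZMod p))) (hσ : σ ∈ G)
    (hσi : σ OnePoint.infty = OnePoint.infty)
    (hσ0 : σ (OnePoint.some 0) = OnePoint.some 0) :
    ∃ c : ZMod p, c ≠ 0 ∧ ∀ z : ZMod p, σ (OnePoint.some z) = OnePoint.some (c * z) := by
  have hp : p.Prime := Fact.out
  have hσmem : σ ∈ GinfSub p G := ⟨hσ, hσi⟩
  have ht1mem : ptrans p 1 ∈ GinfSub p G := ⟨htransl 1, rfl⟩
  set u := σ * ptrans p 1 * σ⁻¹ with hu
  have humem : u ∈ GinfSub p G := mul_mem (mul_mem hσmem ht1mem) (inv_mem hσmem)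
  have hup : u ^ p = 1 := by
    rw [hu, conj_pow, ptrans_npow, mul_one, ZMod.natCast_self, ptrans_zero, mul_one,
      mul_inv_cancel]
  have hune : u ≠ 1 := by
    intro h
    have h2 : σ⁻¹ * (σ * ptrans p 1 * σ⁻¹) * σ = σ⁻¹ * 1 * σ := by rw [← hu, h]
    have h3 : ptrans p 1 = 1 := by group at h2; exact h2
    have h4 := orderOf_ptrans (p := p)
    rw [h3, orderOf_one] at h4
    exact hp.one_lt.ne h4
  have horder : orderOf u = p := orderOf_eq_prime hup hune
  have hu_mem_T : u ∈ Subgroup.zpowers (ptrans p 1) := by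
    by_contra hnot
    have htriv : ∀ x, x ∈ Subgroup.zpowers u → x ∈ Subgroup.zpowers (ptrans p 1) → x = 1 := by
      intro x hxu hxt
      by_contra hx1
      have hxord : orderOf x = p := by
        have hdvd : orderOf x ∣ p := by
          have hh := Subgroup.orderOf_dvd_natCard (Subgroup.zpowers u) hxu
          rwa [Nat.card_zpowers, horder] at hh
        rcases hp.eq_one_or_self_of_dvd _ hdvd with h | h
        · exact absurd (orderOf_eq_one_iff.mp h) hx1
        · exact h
      have hle : Subgroup.zpowers x ≤ Subgroup.zpowers u := Subgroup.zpowers_le.mpr hxu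
      have heq : Subgroup.zpowers x = Subgroup.zpowers u := by
        apply Subgroup.eq_of_le_of_card_ge hle
        rw [Nat.card_zpowers, Nat.card_zpowers, horder, hxord]
      have humem2 : u ∈ Subgroup.zpowers x := by rw [heq]; exact Subgroup.mem_zpowers u
      exact hnot (Subgroup.zpowers_le.mpr hxt humem2)
    have hA : Subgroup.zpowers u ≤ GinfSub p G := Subgroup.zpowers_le.mpr humem
    have hB : Subgroup.zpowers (ptrans p 1) ≤ GinfSub p G := Subgroup.zpowers_le.mpr ht1mem
    let Φ : (Subgroup.zpowers u) × (Subgroup.zpowers (ptrans p 1)) → GinfSub p G :=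
      fun t => ⟨t.1.1 * t.2.1, mul_mem (hA t.1.2) (hB t.2.2)⟩
    have hinj : Function.Injective Φ := by
      rintro ⟨a, b⟩ ⟨a', b'⟩ h
      have h' : a.1 * b.1 = a'.1 * b'.1 := congrArg Subtype.val h
      have hx : a'.1⁻¹ * a.1 = b'.1 * b.1⁻¹ := by
        have h2 := congrArg (fun g => a'.1⁻¹ * g * b.1⁻¹) h'
        simpa [mul_assoc] using h2
      have hmem1 : a'.1⁻¹ * a.1 ∈ Subgroup.zpowers u := mul_mem (inv_mem a'.2) a.2
      have hmem2 : a'.1⁻¹ * a.1 ∈ Subgroup.zpowers (ptrans p 1) := by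
        rw [hx]; exact mul_mem b'.2 (inv_mem b.2)
      have h1 : a'.1⁻¹ * a.1 = 1 := htriv _ hmem1 hmem2
      have h2 : b'.1 * b.1⁻¹ = 1 := hx ▸ h1
      have ha : a'.1 = a.1 := inv_mul_eq_one.mp h1
      have hb : b'.1 = b.1 := mul_inv_eq_one.mp h2
      exact Prod.ext (Subtype.ext ha.symm) (Subtype.ext hb.symm)
    have hcard2 := Nat.card_le_card_of_injective Φ hinj
    rw [Nat.card_prod, Nat.card_zpowers, Nat.card_zpowers, horder, orderOf_ptrans, hGinf]
      at hcard2
    have hle2 : p ≤ (p - 1) / 2 := Nat.le_of_mul_le_mul_left hcard2 hp.pos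
    have := hp.two_le
    omega
  obtain ⟨j, hj⟩ := Subgroup.mem_zpowers_iff.mp hu_mem_T
  set c : ZMod p := (j : ZMod p) with hc
  have huc : u = ptrans p c := by rw [← hj, ptrans_zpow]
  have hval : ∀ z : ZMod p, σ (OnePoint.some z) = OnePoint.some (c * z) := by
    intro z
    have hz : ptrans p z = ptrans p 1 ^ z.val := by
      rw [ptrans_npow, mul_one, ZMod.natCast_val, ZMod.cast_id]
    have hconj : σ * ptrans p z * σ⁻¹ = ptrans p (c * z) := by
      rw [hz, ← conj_pow, ← hu, huc, ptrans_npow]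
      congr 1
      rw [ZMod.natCast_val, ZMod.cast_id, mul_comm]
    have hmain : σ * ptrans p z = ptrans p (c * z) * σ := by
      rw [← hconj]; group
    have happ := congrArg (fun g : Equiv.Perm (OnePoint (ZMod p)) =>
      g (OnePoint.some 0)) hmain
    simp only [Equiv.Perm.mul_apply, ptrans_some, zero_add] at happ
    rw [hσ0, ptrans_some, zero_add] at happ
    exact happ
  have hc0 : c ≠ 0 := by
    intro h
    have h1 := hval 1
    rw [h, zero_mul] at h1
    exact one_ne_zero (some_inj (σ.injective (h1.trans hσ0.symm)))
  exact ⟨c, hc0, hval⟩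

lemma exists_neg_one [Fact p.Prime] (hp2 : p ≠ 2) (hp1 : p % 4 = 1)
    (G : Subgroup (Equiv.Perm (OnePoint (ZMod p))))
    (htrans : ∀ x y : OnePoint (ZMod p), ∃ g ∈ G, g x = y)
    (hcard : Nat.card G = (p ^ 3 - p) / 2)
    (htransl : ∀ a : ZMod p, ptrans p a ∈ G) :
    ∃ ν : Equiv.Perm (OnePoint (ZMod p)), ν ∈ G ∧ ν OnePoint.infty = OnePoint.infty ∧
      ∀ z : ZMod p, ν (OnePoint.some z) = OnePoint.some (-z) := by
  have hp : p.Prime := Fact.out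
  obtain ⟨hGinf, hK⟩ := cards hp2 G htrans hcard htransl
  rw [mul_comm] at hGinf
  letI : Fintype (KSub p G) := Fintype.ofFinite _
  have hdvd : 2 ∣ Fintype.card (KSub p G) := by
    rw [← Nat.card_eq_fintype_card, hK]
    omega
  obtain ⟨x, hx⟩ := exists_prime_orderOf_dvd_card 2 hdvd
  obtain ⟨haG, hai, ha0⟩ := x.2
  have hx2 : x ^ 2 = 1 := by rw [← hx]; exact pow_orderOf_eq_one x
  have hσ2 : (x : Equiv.Perm (OnePoint (ZMod p))) * x = 1 := by
    have h := congrArg (Subtype.val) hx2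
    rw [Subgroup.coe_pow, Subgroup.coe_one, pow_two] at h
    exact h
  obtain ⟨c, hc0, hcv⟩ := scalar_of_fixes G htransl (by rw [hGinf]; ring) x haG hai ha0
  have hcc : c * c = 1 := by
    have happ := congrArg (fun g : Equiv.Perm (OnePoint (ZMod p)) =>
      g (OnePoint.some 1)) hσ2
    simp only [Equiv.Perm.mul_apply, Equiv.Perm.one_apply] at happ
    rw [hcv, hcv] at happ
    have h2 := some_inj happ
    rwa [mul_one] at h2
  have hc1 : c ≠ 1 := by
    intro h
    have hid : (x : Equiv.Perm (OnePoint (ZMod p))) = 1 := by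
      apply Equiv.ext
      intro w
      rcases op_cases w with rfl | ⟨z, rfl⟩
      · rw [hai]; rfl
      · rw [hcv, h, one_mul]; rfl
    have hx1 : x = (1 : KSub p G) := Subtype.ext hid
    rw [hx1, orderOf_one] at hx
    norm_num at hx
  have hcneg : c = -1 := (mul_self_eq_one_iff.mp hcc).resolve_left hc1
  exact ⟨x, haG, hai, fun z => by rw [hcv, hcneg, neg_one_mul]⟩


lemma tau_form [Fact p.Prime] (hp5 : 5 ≤ p)
    (G : Subgroup (Equiv.Perm (OnePoint (ZMod p))))
    (hsc : ∀ σ : Equiv.Perm (OnePoint (ZMod p)), σ ∈ G →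
      σ OnePoint.infty = OnePoint.infty → σ (OnePoint.some 0) = OnePoint.some 0 →
      ∃ c : ZMod p, c ≠ 0 ∧ ∀ z : ZMod p, σ (OnePoint.some z) = OnePoint.some (c * z))
    (htransl : ∀ a : ZMod p, ptrans p a ∈ G)
    (ν : Equiv.Perm (OnePoint (ZMod p))) (hνG : ν ∈ G)
    (hνi : ν OnePoint.infty = OnePoint.infty)
    (hνv : ∀ z : ZMod p, ν (OnePoint.some z) = OnePoint.some (-z))
    (τ : Equiv.Perm (OnePoint (ZMod p))) (hτG : τ ∈ G)
    (hτ0 : τ (OnePoint.some 0) = OnePoint.infty)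
    (hτi : τ OnePoint.infty = OnePoint.some 0) :
    ∃ k : ZMod p, k ≠ 0 ∧ ∀ z : ZMod p, z ≠ 0 →
      τ (OnePoint.some z) = OnePoint.some (k * z⁻¹) := by
  have hp : p.Prime := Fact.out
  have h2z : (2 : ZMod p) ≠ 0 := by
    intro h
    rw [show (2 : ZMod p) = ((2 : ℕ) : ZMod p) by norm_num,
      ZMod.natCast_eq_zero_iff] at h
    exact absurd (Nat.le_of_dvd (by norm_num) h) (by omega)
  have h3z : (3 : ZMod p) ≠ 0 := by
    intro h
    rw [show (3 : ZMod p) = ((3 : ℕ) : ZMod p) by norm_num,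
      ZMod.natCast_eq_zero_iff] at h
    exact absurd (Nat.le_of_dvd (by norm_num) h) (by omega)
  have hfex : ∀ z : ZMod p, z ≠ 0 → ∃ w, w ≠ 0 ∧ τ (OnePoint.some z) = OnePoint.some w := by
    intro z hz
    rcases op_cases (τ (OnePoint.some z)) with h | ⟨w, hw⟩
    · exact absurd (some_inj (τ.injective (h.trans hτ0.symm))) hz
    · refine ⟨w, ?_, hw⟩
      rintro rfl
      rw [← hτi] at hw
      exact some_ne_infty z (τ.injective hw)
  set f : ZMod p → ZMod p := fun z => if h : z = 0 then 0 else (hfex z h).choose with hfdef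
  have hfval : ∀ z, z ≠ 0 → τ (OnePoint.some z) = OnePoint.some (f z) := by
    intro z hz
    simp only [hfdef]
    rw [dif_neg hz]
    exact (hfex z hz).choose_spec.2
  have hfne : ∀ z, z ≠ 0 → f z ≠ 0 := by
    intro z hz
    simp only [hfdef]
    rw [dif_neg hz]
    exact (hfex z hz).choose_spec.1
  have hf0 : f 0 = 0 := by simp [hfdef]
  have hfinj : ∀ z w, z ≠ 0 → w ≠ 0 → f z = f w → z = w := by
    intro z w hz hw h
    apply some_inj
    apply τ.injective
    rw [hfval z hz, hfval w hw, h]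
  have hτinv0 : τ⁻¹ (OnePoint.some 0) = OnePoint.infty := by
    have h := Equiv.symm_apply_apply τ OnePoint.infty
    rw [hτi] at h; exact h
  have hτinvi : τ⁻¹ OnePoint.infty = OnePoint.some 0 := by
    have h := Equiv.symm_apply_apply τ (OnePoint.some 0)
    rw [hτ0] at h; exact h
  have hcj : ∀ (σ : Equiv.Perm (OnePoint (ZMod p))) (c : ZMod p), σ ∈ G →
      σ OnePoint.infty = OnePoint.infty →
      (∀ z, σ (OnePoint.some z) = OnePoint.some (c * z)) →
      ∃ ch, ch ≠ 0 ∧ (∀ z, (τ * σ * τ⁻¹) (OnePoint.some z) = OnePoint.some (ch * z)) ∧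
        ∀ z, z ≠ 0 → f (c * z) = ch * f z := by
    intro σ c hσG hσi hσv
    have hc0 : c ≠ 0 := by
      intro h
      have h1 := hσv 1
      have h0 := hσv 0
      rw [h, zero_mul] at h1
      rw [mul_zero] at h0
      exact one_ne_zero (some_inj (σ.injective (h1.trans h0.symm)))
    have h1 : τ * σ * τ⁻¹ ∈ G := mul_mem (mul_mem hτG hσG) (inv_mem hτG)
    have h2 : (τ * σ * τ⁻¹) OnePoint.infty = OnePoint.infty := by
      simp only [Equiv.Perm.mul_apply]
      rw [hτinvi, hσv, mul_zero, hτ0]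
    have h3 : (τ * σ * τ⁻¹) (OnePoint.some 0) = OnePoint.some 0 := by
      simp only [Equiv.Perm.mul_apply]
      rw [hτinv0, hσi, hτi]
    obtain ⟨ch, hch0, hchv⟩ := hsc _ h1 h2 h3
    refine ⟨ch, hch0, hchv, ?_⟩
    intro z hz
    have e1 : (τ * σ * τ⁻¹) (τ (OnePoint.some z)) = τ (σ (OnePoint.some z)) := by
      simp only [Equiv.Perm.mul_apply, Equiv.Perm.inv_def, Equiv.symm_apply_apply]
    rw [hfval z hz, hchv] at e1
    rw [hσv, hfval (c * z) (mul_ne_zero hc0 hz)] at e1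
    exact (some_inj e1).symm
  have hodd : ∀ z : ZMod p, f (-z) = -(f z) := by
    obtain ⟨ch, hch0, hchv, hhom⟩ := hcj ν (-1) hνG hνi
      (fun z => by rw [hνv, neg_one_mul])
    have hν2 : ν * ν = 1 := by
      apply Equiv.ext
      intro w
      rcases op_cases w with rfl | ⟨z, rfl⟩
      · rw [Equiv.Perm.mul_apply, hνi, hνi]; rfl
      · rw [Equiv.Perm.mul_apply, hνv, hνv, neg_neg]; rfl
    have hττ : (τ * ν * τ⁻¹) * (τ * ν * τ⁻¹) = 1 := by
      have hgr : (τ * ν * τ⁻¹) * (τ * ν * τ⁻¹) = τ * (ν * ν) * τ⁻¹ := by group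
      rw [hgr, hν2, mul_one, mul_inv_cancel]
    have happ : (τ * ν * τ⁻¹) ((τ * ν * τ⁻¹) (OnePoint.some 1)) = OnePoint.some 1 := by
      rw [← Equiv.Perm.mul_apply, hττ]; rfl
    rw [hchv, hchv] at happ
    have hch2 : ch * ch = 1 := by
      have h2 := some_inj happ
      rwa [mul_one] at h2
    have hch1 : ch ≠ 1 := by
      intro h
      have h1 := hhom 1 one_ne_zero
      rw [h, one_mul, mul_one] at h1
      have h3 := hfinj (-1) 1 (neg_ne_zero.mpr one_ne_zero) one_ne_zero h1
      apply h2z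
      linear_combination -h3
    have hchneg : ch = -1 := (mul_self_eq_one_iff.mp hch2).resolve_left hch1
    intro z
    by_cases hz : z = 0
    · rw [hz, neg_zero, hf0, neg_zero]
    · have h1 := hhom z hz
      rw [hchneg, neg_one_mul, neg_one_mul] at h1
      exact h1
  have hττG : τ * τ ∈ G := mul_mem hτG hτG
  have hττi : (τ * τ) OnePoint.infty = OnePoint.infty := by
    rw [Equiv.Perm.mul_apply, hτi, hτ0]
  have hττ0 : (τ * τ) (OnePoint.some 0) = OnePoint.some 0 := by
    rw [Equiv.Perm.mul_apply, hτ0, hτi]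
  obtain ⟨e, he0, hev⟩ := hsc (τ * τ) hττG hττi hττ0
  have hff : ∀ z, z ≠ 0 → f (f z) = e * z := by
    intro z hz
    have h1 : (τ * τ) (OnePoint.some z) = OnePoint.some (e * z) := hev z
    rw [Equiv.Perm.mul_apply, hfval z hz, hfval (f z) (hfne z hz)] at h1
    exact some_inj h1
  have hfe : ∀ z, z ≠ 0 → f (e * z) = e * f z := by
    intro z hz
    rw [← hff z hz]
    exact hff (f z) (hfne z hz)
  have hD : ∀ a b : ZMod p, a ≠ 0 → b ≠ 0 → f b = a →
      ∃ dh, dh ≠ 0 ∧ ∀ y, y ≠ 0 → y ≠ b → dh * f y = f (f (y - b) + a) - f a := by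
    intro a b ha hb hfb
    set τ' : Equiv.Perm (OnePoint (ZMod p)) :=
      ptrans p (-(f a)) * (τ * (ptrans p a * (τ * ptrans p (-b)))) with hτ'def
    have hτ'G : τ' ∈ G :=
      mul_mem (htransl _) (mul_mem hτG (mul_mem (htransl _) (mul_mem hτG (htransl _))))
    have happly : ∀ x, τ' x = ptrans p (-(f a)) (τ (ptrans p a (τ (ptrans p (-b) x)))) := by
      intro x; rw [hτ'def]; simp only [Equiv.Perm.mul_apply]
    have hτ'0 : τ' (OnePoint.some 0) = OnePoint.infty := by
      rw [happly, ptrans_some, zero_add, hfval (-b) (neg_ne_zero.mpr hb), hodd b, hfb,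
        ptrans_some, neg_add_cancel, hτ0, ptrans_infty]
    have hτ'i : τ' OnePoint.infty = OnePoint.some 0 := by
      rw [happly, ptrans_infty, hτi, ptrans_some, zero_add, hfval a ha, ptrans_some,
        add_neg_cancel]
    set σd := τ⁻¹ * τ' with hσd
    have hσdG : σd ∈ G := mul_mem (inv_mem hτG) hτ'G
    have hσdi : σd OnePoint.infty = OnePoint.infty := by
      rw [hσd, Equiv.Perm.mul_apply, hτ'i, hτinv0]
    have hσd0 : σd (OnePoint.some 0) = OnePoint.some 0 := by
      rw [hσd, Equiv.Perm.mul_apply, hτ'0, hτinvi]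
    obtain ⟨d, hd0, hdv⟩ := hsc σd hσdG hσdi hσd0
    obtain ⟨dh, hdh0, _, hdhom⟩ := hcj σd d hσdG hσdi hdv
    have hτσ : ∀ x, τ' x = τ (σd x) := by
      intro x
      have h := congrArg τ (Equiv.Perm.mul_apply τ⁻¹ τ' x)
      rw [Equiv.Perm.inv_def, Equiv.apply_symm_apply] at h
      exact h.symm
    refine ⟨dh, hdh0, ?_⟩
    intro y hy hyb
    have w1 : τ' (OnePoint.some y) = OnePoint.some (dh * f y) := by
      rw [hτσ, hdv, hfval (d * y) (mul_ne_zero hd0 hy), hdhom y hy]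
    have hyb' : y - b ≠ 0 := sub_ne_zero.mpr hyb
    have hne : f (y - b) + a ≠ 0 := by
      intro h
      have h2 : f (y - b) = f (-b) := by
        rw [hodd b, hfb]
        exact eq_neg_of_add_eq_zero_left h
      have h3 := hfinj (y - b) (-b) hyb' (neg_ne_zero.mpr hb) h2
      apply hy
      linear_combination h3
    have w2 : τ' (OnePoint.some y) = OnePoint.some (f (f (y - b) + a) + -(f a)) := by
      rw [happly, ptrans_some, ← sub_eq_add_neg, hfval (y - b) hyb', ptrans_some,
        hfval _ hne, ptrans_some]
    rw [w1] at w2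
    have h5 := some_inj w2
    rw [← sub_eq_add_neg] at h5
    exact h5
  have hstep : ∀ α ω : ZMod p, α ≠ 0 → ω ≠ 0 → ω + α ≠ 0 →
      f α * f (f ω + f α) = -(e * α) * f (ω + α) + e * α * f α := by
    intro α ω hα hω hωα
    obtain ⟨D1, hD1ne, hD1⟩ := hD (f α) α (hfne α hα) hα rfl
    have h1 : ∀ ω', ω' ≠ 0 → ω' + α ≠ 0 → D1 * f (ω' + α) = f (f ω' + f α) - e * α := by
      intro ω' hω' hs
      have h := hD1 (ω' + α) hs (fun hh => hω' (by linear_combination hh))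
      rw [add_sub_cancel_right, hff α hα] at h
      exact h
    obtain ⟨D2, hD2ne, hD2⟩ := hD (e * α) (f α) (mul_ne_zero he0 hα) (hfne α hα) (hff α hα)
    have h2 : ∀ ω', ω' ≠ 0 → ω' + α ≠ 0 → D2 * f (f ω' + f α) = e * f (ω' + α) - e * f α := by
      intro ω' hω' hs
      have hfω' := hfne ω' hω'
      have hne1 : f ω' + f α ≠ 0 := by
        intro h
        have hh : f ω' = f (-α) := by
          rw [hodd α]
          exact eq_neg_of_add_eq_zero_left h
        have h3 := hfinj ω' (-α) hω' (neg_ne_zero.mpr hα) hh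
        exact hs (by linear_combination h3)
      have hne2 : f ω' + f α ≠ f α := by
        intro h
        exact hfω' (by linear_combination h)
      have h := hD2 (f ω' + f α) hne1 hne2
      rw [add_sub_cancel_right, hff ω' hω'] at h
      rw [show e * ω' + e * α = e * (ω' + α) by ring, hfe (ω' + α) hs, hfe α hα] at h
      exact h
    have hαα : α + α ≠ 0 := by
      intro h
      rcases mul_eq_zero.mp (show (2 : ZMod p) * α = 0 by linear_combination h) with h' | h'
      · exact h2z h'
      · exact hα h'
    have h2α : 2 * α ≠ 0 := mul_ne_zero h2z hα
    have h2αα : 2 * α + α ≠ 0 := by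
      intro h
      rcases mul_eq_zero.mp (show (3 : ZMod p) * α = 0 by linear_combination h) with h' | h'
      · exact h3z h'
      · exact hα h'
    have G1 := h1 α hα hαα
    have G2 := h2 α hα hαα
    have G1' := h1 (2*α) h2α h2αα
    have G2' := h2 (2*α) h2α h2αα
    have hcomb1 : (e - D2 * D1) * f (α + α) = D2 * e * α + e * f α := by
      linear_combination -G2 - D2 * G1
    have hcomb2 : (e - D2 * D1) * f (2*α + α) = D2 * e * α + e * f α := by
      linear_combination -G2' - D2 * G1'
    have hdiff : (e - D2 * D1) * (f (α + α) - f (2*α + α)) = 0 := by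
      linear_combination hcomb1 - hcomb2
    have hfneq : f (α + α) - f (2*α + α) ≠ 0 := by
      intro h
      have hh2 : f (α + α) = f (2*α + α) := by linear_combination h
      have h3 := hfinj (α + α) (2*α + α) hαα h2αα hh2
      exact hα (by linear_combination -h3)
    have heD : e = D2 * D1 := by
      have hz := (mul_eq_zero.mp hdiff).resolve_right hfneq
      linear_combination hz
    have hfα : f α = -(D2 * α) := by
      have h4 : D2 * e * α + e * f α = 0 := by
        linear_combination -hcomb1 + f (α + α) * heD
      have h5 : e * (f α + D2 * α) = 0 := by linear_combination h4
      have h6 := (mul_eq_zero.mp h5).resolve_left he0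
      linear_combination h6
    have h6 := h1 ω hω hωα
    linear_combination (-(f α)) * h6 + (D1 * f (ω + α)) * hfα + (α * f (ω + α)) * heD
  have hMAIN : ∀ α ω : ZMod p, α ≠ 0 → ω ≠ 0 → ω + α ≠ 0 →
      (ω * f α - α * f ω) * f (ω + α) = (ω - α) * (f ω * f α) := by
    intro α ω hα hω hs
    have hA := hstep α ω hα hω hs
    have hB := hstep ω α hω hα (by rwa [add_comm])
    rw [add_comm (f α) (f ω), add_comm α ω] at hB
    have hsub : e * ((ω * f α - α * f ω) * f (ω + α) - (ω - α) * (f ω * f α)) = 0 := by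
      linear_combination (f α) * hB - (f ω) * hA
    have hz := (mul_eq_zero.mp hsub).resolve_left he0
    linear_combination hz
  have hk0 : f 1 ≠ 0 := hfne 1 one_ne_zero
  have hsolve : ∀ x : ZMod p, x ≠ 0 → f x * x = f 1 := by
    intro x hx
    by_cases hxm1 : x = -1
    · rw [hxm1, hodd 1]
      ring
    · have hx1 : x + 1 ≠ 0 := by
        intro h; exact hxm1 (by linear_combination h)
      have E1 := hMAIN 1 x one_ne_zero hx hx1
      have hx1' : (x + 1) + (-1) ≠ 0 := by
        intro h; exact hx (by linear_combination h)
      have E2 := hMAIN (-1) (x+1) (neg_ne_zero.mpr one_ne_zero) hx1 hx1'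
      rw [show (x + 1) + (-1) = x by ring, hodd 1] at E2
      have h5 : f 1 * ((2*x+2) * f (x+1) - 2*x * f x) = 0 := by
        linear_combination E1 + E2
      have h6 : (2*x+2) * f (x+1) - 2*x * f x = 0 := (mul_eq_zero.mp h5).resolve_left hk0
      have h7 : (x+1) * f (x+1) = x * f x := by
        have h8 : (2 : ZMod p) * ((x+1) * f (x+1) - x * f x) = 0 := by linear_combination h6
        have h9 := (mul_eq_zero.mp h8).resolve_left h2z
        linear_combination h9
      have hu0 : f x ≠ 0 := hfne x hx
      have h8 : f x * ((x * f 1 - f x) * x) = f x * ((x-1)*(x+1) * f 1) := by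
        linear_combination (x+1) * E1 - (x * f 1 - f x) * h7
      have h9 := mul_left_cancel₀ hu0 h8
      linear_combination -h9
  refine ⟨f 1, hk0, ?_⟩
  intro z hz
  rw [hfval z hz, ← hsolve z hz, mul_assoc, mul_inv_cancel₀ hz, mul_one]

end KbarAux


theorem Kbar_inverts_K
    (p : ℕ) [Fact p.Prime] (hp2 : p ≠ 2) (hp1 : p % 4 = 1)
    (G : Subgroup (Equiv.Perm (OnePoint (ZMod p))))
    (htrans : ∀ x y : OnePoint (ZMod p), ∃ g ∈ G, g x = y)
    (hcard : Nat.card G = (p ^ 3 - p) / 2)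
    (htransl : ∀ a : ZMod p, ptrans p a ∈ G) :
    ∀ τ ∈ G, τ (OnePoint.some (0 : ZMod p)) = OnePoint.infty →
      τ OnePoint.infty = OnePoint.some (0 : ZMod p) →
      (∀ σ ∈ G, σ (OnePoint.some (0 : ZMod p)) = OnePoint.some (0 : ZMod p) →
        σ OnePoint.infty = OnePoint.infty → τ * σ * τ⁻¹ = σ⁻¹) ∧
      (∀ a ∈ Rset p, ∀ z : ZMod p, z ≠ 0 →
        τ (OnePoint.some (a * z)) = opSmul p a⁻¹ (τ (OnePoint.some z))) := by
  classical
  intro τ hτG hτ0 hτi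
  have hp : p.Prime := Fact.out
  have hp5 : 5 ≤ p := by
    have h2 := hp.two_le
    omega
  obtain ⟨hGinf, hK⟩ := KbarAux.cards hp2 G htrans hcard htransl
  have hsc : ∀ σ : Equiv.Perm (OnePoint (ZMod p)), σ ∈ G →
      σ OnePoint.infty = OnePoint.infty →
      σ (OnePoint.some 0) = OnePoint.some 0 →
      ∃ c : ZMod p, c ≠ 0 ∧ ∀ z : ZMod p, σ (OnePoint.some z) = OnePoint.some (c * z) :=
    fun σ hσ hσi hσ0 => KbarAux.scalar_of_fixes G htransl hGinf σ hσ hσi hσ0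
  obtain ⟨ν, hνG, hνi, hνv⟩ := KbarAux.exists_neg_one hp2 hp1 G htrans hcard htransl
  obtain ⟨k, hk0, hkv⟩ := KbarAux.tau_form hp5 G hsc htransl ν hνG hνi hνv τ hτG hτ0 hτi
  constructor
  · intro σ hσG hσ0 hσi
    obtain ⟨c, hc0, hcv⟩ := hsc σ hσG hσi hσ0
    have hσinv : ∀ z : ZMod p, σ⁻¹ (OnePoint.some z) = OnePoint.some (c⁻¹ * z) := by
      intro z
      apply σ.injective
      rw [Equiv.Perm.inv_def, Equiv.apply_symm_apply, hcv, mul_inv_cancel_left₀ hc0]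
    have hσinvi : σ⁻¹ OnePoint.infty = OnePoint.infty := by
      apply σ.injective
      rw [Equiv.Perm.inv_def, Equiv.apply_symm_apply, hσi]
    have hmain : τ * σ = σ⁻¹ * τ := by
      apply Equiv.ext
      intro x
      rcases KbarAux.op_cases x with rfl | ⟨a, rfl⟩
      · rw [Equiv.Perm.mul_apply, Equiv.Perm.mul_apply, hσi, hτi, hσinv, mul_zero]
      · by_cases ha : a = 0
        · subst ha
          rw [Equiv.Perm.mul_apply, Equiv.Perm.mul_apply, hσ0, hτ0, hσinvi]
        · rw [Equiv.Perm.mul_apply, Equiv.Perm.mul_apply, hcv,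
            hkv _ (mul_ne_zero hc0 ha), hkv a ha, hσinv]
          congr 1
          rw [mul_inv]
          ring
    calc τ * σ * τ⁻¹ = (σ⁻¹ * τ) * τ⁻¹ := by rw [hmain]
      _ = σ⁻¹ := by rw [mul_assoc, mul_inv_cancel, mul_one]
  · intro a ha z hz
    obtain ⟨ha0, -⟩ := ha
    rw [hkv _ (mul_ne_zero ha0 hz), hkv z hz]
    have hop : opSmul p a⁻¹ (OnePoint.some (k * z⁻¹)) =
        OnePoint.some (a⁻¹ * (k * z⁻¹)) := rfl
    rw [hop]
    congr 1
    rw [mul_inv]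
    ring
end
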